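/- arXiv:2401.04622 — 4 statements merged into one kernel-verified Lean document; each statement's English description precedes it below -/
import Mathlib

section
/- Let ℓ ≥ 2 be an integer and let a, ρ > 0 satisfy J_{ℓ−1}(aρ) = 0 and J_ℓ(aρ) ≠ 0. Define f : (0,∞) → ℝ by f(r) = J_ℓ(ar)/J_ℓ(aρ) for 0 < r ≤ ρ and f(r) = (ρ/r)^ℓ for r > ρ. Then f is continuously differentiable on (0,∞); f is twice differentiable on (0,ρ) and on (ρ,∞), where it satisfies f″(r) + f′(r)/r + (a²·𝟙_{r<ρ} − ℓ²/r²)·f(r) = 0; and ∫₀^∞ f(r)²·r dr < ∞. (Thus (r,θ) ↦ f(r)e^{iℓθ} is a zero-energy eigenfunction of −Δ − a²·𝟙_{|x|≤ρ} on ℝ².) -/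
open scoped Real Topology
open Filter Asymptotics

noncomputable def eulerGamma : ℝ := -deriv Real.Gamma 1

noncomputable def harm (m : ℕ) : ℝ := ∑ j ∈ Finset.range m, (1 : ℝ)/(j+1)

noncomputable def besselJr (ℓ : ℕ) (x : ℝ) : ℝ :=
  ∑' k : ℕ, ((-1 : ℝ)^k / ((Nat.factorial k : ℝ) * (Nat.factorial (k + ℓ) : ℝ))) * (x/2)^(2*k + ℓ)

noncomputable def besselYr (ℓ : ℕ) (x : ℝ) : ℝ :=
  (2/Real.pi) * (Real.log (x/2) + eulerGamma) * besselJr ℓ x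
  - (1/Real.pi) * ∑ k ∈ Finset.range ℓ,
      ((Nat.factorial (ℓ - k - 1) : ℝ) / (Nat.factorial k : ℝ)) * (x/2)^(2*(k:ℤ) - (ℓ:ℤ))
  - (1/Real.pi) * ∑' k : ℕ,
      ((-1:ℝ)^k * (harm k + harm (k+ℓ)) / ((Nat.factorial k : ℝ) * (Nat.factorial (k+ℓ) : ℝ))) * (x/2)^(2*k+ℓ)

noncomputable def besselJn (ℓ : ℕ) (z : ℂ) : ℂ :=
  ∑' k : ℕ, ((-1 : ℂ)^k / ((Nat.factorial k : ℂ) * (Nat.factorial (k + ℓ) : ℂ))) * (z/2)^(2*k + ℓ)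

noncomputable def besselJZ (ℓ : ℤ) (z : ℂ) : ℂ :=
  if 0 ≤ ℓ then besselJn ℓ.toNat z else (-1 : ℂ)^((-ℓ).toNat) * besselJn (-ℓ).toNat z

noncomputable def besselYn (ℓ : ℕ) (z : ℂ) : ℂ :=
  (2/(Real.pi : ℂ)) * (Complex.log (z/2) + (eulerGamma : ℂ)) * besselJn ℓ z
  - (1/(Real.pi : ℂ)) * ∑ k ∈ Finset.range ℓ,
      ((Nat.factorial (ℓ - k - 1) : ℂ) / (Nat.factorial k : ℂ)) * (z/2)^(2*(k:ℤ) - (ℓ:ℤ))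
  - (1/(Real.pi : ℂ)) * ∑' k : ℕ,
      ((-1:ℂ)^k * ((harm k : ℝ) + (harm (k+ℓ) : ℝ)) / ((Nat.factorial k : ℂ) * (Nat.factorial (k+ℓ) : ℂ))) * (z/2)^(2*k+ℓ)

noncomputable def besselYZ (ℓ : ℤ) (z : ℂ) : ℂ :=
  if 0 ≤ ℓ then besselYn ℓ.toNat z else (-1 : ℂ)^((-ℓ).toNat) * besselYn (-ℓ).toNat z

noncomputable def hankelH1 (ℓ : ℤ) (z : ℂ) : ℂ := besselJZ ℓ z + Complex.I * besselYZ ℓ z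

noncomputable def hankelH1n (ℓ : ℕ) (z : ℂ) : ℂ := besselJn ℓ z + Complex.I * besselYn ℓ z
noncomputable def hankelH2n (ℓ : ℕ) (z : ℂ) : ℂ := besselJn ℓ z - Complex.I * besselYn ℓ z

noncomputable def muC (a : ℝ) (lam : ℂ) : ℂ := (lam^2 + (a:ℂ)^2) ^ ((1:ℂ)/2)

noncomputable def Qfun (ρ : ℝ) (ℓ : ℤ) (lam : ℂ) (a : ℝ) : ℂ :=
  muC a lam * besselJZ (ℓ-1) ((ρ:ℂ) * muC a lam) * hankelH1 ℓ (lam * (ρ:ℂ))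
  - lam * besselJZ ℓ ((ρ:ℂ) * muC a lam) * hankelH1 (ℓ-1) (lam * (ρ:ℂ))

noncomputable def Dfun (a ρ : ℝ) (ℓ : ℕ) (lam : ℝ) : ℝ :=
  (Real.sqrt (lam^2+a^2) * besselJr (ℓ-1) (Real.sqrt (lam^2+a^2)*ρ) * besselJr ℓ (lam*ρ)
    - lam * besselJr ℓ (Real.sqrt (lam^2+a^2)*ρ) * besselJr (ℓ-1) (lam*ρ))^2
  + (Real.sqrt (lam^2+a^2) * besselJr (ℓ-1) (Real.sqrt (lam^2+a^2)*ρ) * besselYr ℓ (lam*ρ)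
    - lam * besselJr ℓ (Real.sqrt (lam^2+a^2)*ρ) * besselYr (ℓ-1) (lam*ρ))^2

noncomputable def Ffun (a ρ : ℝ) (ℓ : ℕ) (lam : ℝ) : ℝ :=
  (2*a^2/(Real.pi^2*lam)) * besselJr (ℓ-1) (Real.sqrt (lam^2+a^2)*ρ)
    * besselJr (ℓ+1) (Real.sqrt (lam^2+a^2)*ρ) / Dfun a ρ ℓ lam

noncomputable def D0fun (a ρ : ℝ) (lam : ℝ) : ℝ :=
  (Real.sqrt (lam^2+a^2) * besselJr 1 (Real.sqrt (lam^2+a^2)*ρ) * besselJr 0 (lam*ρ)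
    - lam * besselJr 0 (Real.sqrt (lam^2+a^2)*ρ) * besselJr 1 (lam*ρ))^2
  + (Real.sqrt (lam^2+a^2) * besselJr 1 (Real.sqrt (lam^2+a^2)*ρ) * besselYr 0 (lam*ρ)
    - lam * besselJr 0 (Real.sqrt (lam^2+a^2)*ρ) * besselYr 1 (lam*ρ))^2

noncomputable def F0fun (a ρ : ℝ) (lam : ℝ) : ℝ :=
  -(2*a^2/(Real.pi^2*lam)) * (besselJr 1 (Real.sqrt (lam^2+a^2)*ρ))^2 / D0fun a ρ lam

namespace BesselAux

/-- term of the Bessel series -/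
noncomputable def bt (ℓ k : ℕ) (x : ℝ) : ℝ :=
  ((-1 : ℝ)^k / ((Nat.factorial k : ℝ) * (Nat.factorial (k + ℓ) : ℝ))) * (x/2)^(2*k + ℓ)

/-- term of the derivative series -/
noncomputable def bt' (ℓ k : ℕ) (x : ℝ) : ℝ :=
  ((-1 : ℝ)^k / ((Nat.factorial k : ℝ) * (Nat.factorial (k + ℓ) : ℝ)))
    * ((2*k + ℓ : ℕ) : ℝ) * (x/2)^(2*k + ℓ - 1) / 2

lemma besselJr_eq (ℓ : ℕ) (x : ℝ) : besselJr ℓ x = ∑' k, bt ℓ k x := rfl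

lemma sumA (A B : ℝ) (hA : 0 ≤ A) (hB : 0 ≤ B) :
    Summable (fun k : ℕ => (2*k + A) * B^k / (Nat.factorial k : ℝ)) := by
  have h := (Real.summable_pow_div_factorial (2*B)).mul_left (A + 2)
  refine Summable.of_nonneg_of_le (fun k => ?_) (fun k => ?_) h
  · positivity
  · have hk : (k:ℝ) ≤ 2^k := by exact_mod_cast (Nat.lt_two_pow_self (n := k)).le
    have h1 : (1:ℝ) ≤ 2^k := one_le_pow₀ (by norm_num)
    have h2 : (2*(k:ℝ) + A) ≤ (A + 2) * 2^k := by nlinarith [mul_nonneg hA (sub_nonneg.2 h1)]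
    have h3 : (2*(k:ℝ) + A) * B^k ≤ (A + 2) * (2*B)^k := by
      rw [mul_pow]
      calc (2*(k:ℝ) + A) * B^k ≤ ((A + 2) * 2^k) * B^k :=
            mul_le_mul_of_nonneg_right h2 (by positivity)
        _ = (A + 2) * (2^k * B^k) := by ring
    calc (2*(k:ℝ) + A) * B^k / (Nat.factorial k : ℝ)
        ≤ (A + 2) * (2*B)^k / (Nat.factorial k : ℝ) := by gcongr
      _ = (A + 2) * ((2*B)^k / (Nat.factorial k : ℝ)) := by ring

end BesselAux

namespace BesselAux

lemma one_le_fact (n : ℕ) : (1:ℝ) ≤ (Nat.factorial n : ℝ) :=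
  Nat.one_le_cast.mpr (Nat.factorial_pos n)

lemma norm_bt'_le (ℓ k : ℕ) {x M : ℝ} (hM : |x/2| ≤ M) (hM1 : 1 ≤ M) :
    ‖bt' ℓ k x‖ ≤ ((2*k + (ℓ:ℝ)) * (M^2)^k / (Nat.factorial k : ℝ)) * M^ℓ := by
  have hM0 : (0:ℝ) ≤ M := le_trans zero_le_one hM1
  have h2 : |x/2|^(2*k+ℓ-1) ≤ (M^2)^k * M^ℓ := by
    rw [← pow_mul, ← pow_add]
    exact (pow_le_pow_left₀ (abs_nonneg _) hM _).trans (pow_le_pow_right₀ hM1 (by omega))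
  have h1 : ‖bt' ℓ k x‖
      = (2*(k:ℝ) + ℓ) / ((Nat.factorial k : ℝ) * (Nat.factorial (k+ℓ) : ℝ)) * |x/2|^(2*k+ℓ-1) / 2 := by
    simp only [bt', Real.norm_eq_abs, abs_div, abs_mul, abs_pow, abs_neg, abs_one, one_pow,
      Nat.abs_cast]
    push_cast
    rw [abs_of_nonneg (by norm_num : (0:ℝ) ≤ 2)]
    ring
  rw [h1]
  have hRHS : (2*(k:ℝ)+ℓ) * (M^2)^k / (Nat.factorial k : ℝ) * M^ℓ
      = (2*(k:ℝ)+ℓ) / ((Nat.factorial k : ℝ) * 1) * ((M^2)^k * M^ℓ) / 1 := by ring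
  rw [hRHS]
  gcongr
  · exact one_le_fact _
  · norm_num

lemma summable_bt' (ℓ : ℕ) (x : ℝ) : Summable (fun k => bt' ℓ k x) := by
  have hM : |x/2| ≤ max |x/2| 1 := le_max_left _ _
  have hM1 : (1:ℝ) ≤ max |x/2| 1 := le_max_right _ _
  apply Summable.of_norm_bounded
    ((sumA ℓ ((max |x/2| 1)^2) (Nat.cast_nonneg _) (by positivity)).mul_right ((max |x/2| 1)^ℓ))
  exact fun k => norm_bt'_le ℓ k hM hM1

lemma summable_bt (ℓ : ℕ) (x : ℝ) : Summable (fun k => bt ℓ k x) := by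
  apply Summable.of_norm_bounded ((Real.summable_pow_div_factorial ((x/2)^2)).mul_left (|x/2|^ℓ))
  intro k
  have h1 : ‖bt ℓ k x‖ = |x/2|^(2*k+ℓ) / ((Nat.factorial k : ℝ) * (Nat.factorial (k+ℓ) : ℝ)) := by
    simp only [bt, Real.norm_eq_abs, abs_div, abs_mul, abs_pow, abs_neg, abs_one, one_pow,
      Nat.abs_cast]
    ring
  rw [h1]
  have h2 : |x/2|^(2*k+ℓ) = |x/2|^ℓ * (((x/2)^2)^k) := by
    rw [← sq_abs, ← pow_mul, ← pow_add]; ring_nf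
  rw [h2, ← mul_div_assoc]
  gcongr
  nlinarith [one_le_fact k, one_le_fact (k+ℓ), (Nat.cast_pos (α := ℝ)).mpr (Nat.factorial_pos k)]

lemma hasDerivAt_bt (ℓ k : ℕ) (x : ℝ) : HasDerivAt (fun y => bt ℓ k y) (bt' ℓ k x) x := by
  have h := (((hasDerivAt_id x).div_const 2).pow (2*k+ℓ)).const_mul
    ((-1 : ℝ)^k / ((Nat.factorial k : ℝ) * (Nat.factorial (k + ℓ) : ℝ)))
  refine h.congr_deriv ?_
  rw [bt']
  push_cast
  simp only [id_eq]
  ring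

noncomputable def dJ (ℓ : ℕ) (x : ℝ) : ℝ := ∑' k, bt' ℓ k x

theorem hasDerivAt_besselJr (ℓ : ℕ) (x : ℝ) : HasDerivAt (besselJr ℓ) (dJ ℓ x) x := by
  have hM1 : (1:ℝ) ≤ max ((|x|+1)/2) 1 := le_max_right _ _
  have key : HasDerivAt (fun z => ∑' k, bt ℓ k z) (∑' k, bt' ℓ k x) x := by
    refine hasDerivAt_tsum_of_isPreconnected
      (u := fun k => ((2*k + (ℓ:ℝ)) * ((max ((|x|+1)/2) 1)^2)^k / (Nat.factorial k : ℝ))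
              * (max ((|x|+1)/2) 1)^ℓ)
      (t := Metric.ball (0:ℝ) (|x|+1)) (y₀ := (0:ℝ))
      ((sumA ℓ _ (Nat.cast_nonneg _) (by positivity)).mul_right _)
      Metric.isOpen_ball (convex_ball (0:ℝ) (|x|+1)).isPreconnected
      (fun k y _ => hasDerivAt_bt ℓ k y)
      (fun k y hy => norm_bt'_le ℓ k ?_ hM1) ?_ (summable_bt ℓ 0) ?_
    · have hy' : |y| < |x| + 1 := by simpa [Real.dist_eq] using hy
      rw [abs_div, abs_of_nonneg (by norm_num : (0:ℝ) ≤ 2)]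
      exact le_trans (by linarith) (le_max_left _ _)
    · simp only [Metric.mem_ball, Real.dist_eq, sub_zero, abs_zero]
      positivity
    · simp only [Metric.mem_ball, Real.dist_eq, sub_zero]
      linarith [abs_nonneg x]
  exact key

lemma differentiable_besselJr (ℓ : ℕ) : Differentiable ℝ (besselJr ℓ) :=
  fun x => (hasDerivAt_besselJr ℓ x).differentiableAt

lemma continuous_besselJr (ℓ : ℕ) : Continuous (besselJr ℓ) :=
  (differentiable_besselJr ℓ).continuous

lemma deriv_besselJr (ℓ : ℕ) (x : ℝ) : deriv (besselJr ℓ) x = dJ ℓ x :=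
  (hasDerivAt_besselJr ℓ x).deriv

end BesselAux

namespace BesselAux

lemma dJ_eq_A (m : ℕ) {x : ℝ} (hx : x ≠ 0) :
    dJ (m+1) x = besselJr m x - ((m:ℝ)+1)/x * besselJr (m+1) x := by
  rw [besselJr_eq, besselJr_eq, ← tsum_mul_left,
    ← Summable.tsum_sub (summable_bt m x) ((summable_bt (m+1) x).mul_left _)]
  refine tsum_congr fun k => ?_
  have hf : ((Nat.factorial (k + (m+1)) : ℝ)) = ((k:ℝ)+m+1) * (Nat.factorial (k+m) : ℝ) := by
    rw [show k + (m+1) = (k+m)+1 by ring, Nat.factorial_succ]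
    push_cast; ring
  have hp : (x/2)^(2*k + (m+1)) = (x/2)^(2*k+m) * (x/2) := by
    rw [show 2*k+(m+1) = (2*k+m)+1 by ring, pow_succ]
  have hp2 : 2*k + (m+1) - 1 = 2*k + m := by omega
  simp only [bt, bt', hf, hp, hp2]
  have hk : (Nat.factorial k : ℝ) ≠ 0 := by positivity
  have hkm : (Nat.factorial (k+m) : ℝ) ≠ 0 := by positivity
  have hkm1 : ((k:ℝ)+m+1) ≠ 0 := by positivity
  push_cast
  field_simp
  ring

lemma dJ_eq_B (ℓ : ℕ) {x : ℝ} (hx : x ≠ 0) :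
    dJ ℓ x = (ℓ:ℝ)/x * besselJr ℓ x - besselJr (ℓ+1) x := by
  have hsum : Summable (fun k => bt' ℓ k x - (ℓ:ℝ)/x * bt ℓ k x) :=
    (summable_bt' ℓ x).sub ((summable_bt ℓ x).mul_left _)
  have key : dJ ℓ x - (ℓ:ℝ)/x * besselJr ℓ x = - besselJr (ℓ+1) x := by
    rw [besselJr_eq, ← tsum_mul_left, dJ,
      ← Summable.tsum_sub (summable_bt' ℓ x) ((summable_bt ℓ x).mul_left _)]
    rw [Summable.tsum_eq_zero_add hsum]
    have h0 : bt' ℓ 0 x - (ℓ:ℝ)/x * bt ℓ 0 x = 0 := by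
      rcases Nat.eq_zero_or_pos ℓ with h | h
      · subst h; simp [bt, bt']
      · obtain ⟨m, rfl⟩ : ∃ m, ℓ = m + 1 := ⟨ℓ-1, (Nat.succ_pred_eq_of_pos h).symm⟩
        have hp : (x/2)^(2*0 + (m+1)) = (x/2)^m * (x/2) := by
          rw [show 2*0+(m+1) = m+1 by ring, pow_succ]
        simp only [bt, bt', hp]
        have hp2 : 2*0 + (m+1) - 1 = m := by omega
        rw [hp2]
        push_cast
        field_simp
        ring
    rw [h0, zero_add]
    have hterm : ∀ k : ℕ, bt' ℓ (k+1) x - (ℓ:ℝ)/x * bt ℓ (k+1) x = - bt (ℓ+1) k x := by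
      intro k
      have hf1 : ((Nat.factorial (k+1) : ℝ)) = ((k:ℝ)+1) * (Nat.factorial k : ℝ) := by
        rw [Nat.factorial_succ]; push_cast; ring
      have hf2 : (k+1) + ℓ = (k + (ℓ+1)) := by omega
      have hp : (x/2)^(2*(k+1) + ℓ) = (x/2)^(2*k+ℓ+1) * (x/2) := by
        rw [show 2*(k+1)+ℓ = (2*k+ℓ+1)+1 by ring, pow_succ]
      have hp2 : 2*(k+1) + ℓ - 1 = 2*k+ℓ+1 := by omega
      have hp3 : 2*k + (ℓ+1) = 2*k+ℓ+1 := by omega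
      simp only [bt, bt', hf2, hp, hp2, hp3, hf1, pow_succ]
      have hk : (Nat.factorial k : ℝ) ≠ 0 := by positivity
      have hkm : (Nat.factorial (k+(ℓ+1)) : ℝ) ≠ 0 := by positivity
      push_cast
      field_simp
      ring
    rw [tsum_congr hterm, tsum_neg, besselJr_eq]
  linarith [key]

end BesselAux

namespace BesselAux

lemma hasDerivAt_dJ (m : ℕ) {x : ℝ} (hx : x ≠ 0) :
    HasDerivAt (dJ (m+1)) (-(dJ (m+1) x / x) - (1 - ((m:ℝ)+1)^2/x^2) * besselJr (m+1) x) x := by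
  have hEV : (fun y => besselJr m y - ((m:ℝ)+1)/y * besselJr (m+1) y) =ᶠ[𝓝 x] dJ (m+1) := by
    filter_upwards [eventually_ne_nhds hx] with y hy using (dJ_eq_A m hy).symm
  have hD := (hasDerivAt_besselJr m x).sub
    (((hasDerivAt_const x ((m:ℝ)+1)).div (hasDerivAt_id x) hx).mul (hasDerivAt_besselJr (m+1) x))
  have h2 := hD.congr_of_eventuallyEq hEV.symm
  refine h2.congr_deriv ?_
  simp only [id_eq, Pi.div_apply]
  rw [dJ_eq_B m hx, dJ_eq_A m hx]
  field_simp
  ring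

end BesselAux

open BesselAux

/-- zero-energy eigenfunction of the circular well in the ℓ-th mode, ℓ ≥ 2. -/
theorem stmt_0 (ℓ : ℕ) (hℓ : 2 ≤ ℓ) (a ρ : ℝ) (ha : 0 < a) (hρ : 0 < ρ)
    (hJ1 : besselJr (ℓ-1) (a*ρ) = 0) (hJ2 : besselJr ℓ (a*ρ) ≠ 0)
    (f : ℝ → ℝ)
    (hfin : ∀ r : ℝ, 0 < r → r ≤ ρ → f r = besselJr ℓ (a*r) / besselJr ℓ (a*ρ))
    (hfout : ∀ r : ℝ, ρ < r → f r = (ρ/r)^ℓ) :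
    ContDiffOn ℝ 1 f (Set.Ioi 0) ∧
    (∀ r : ℝ, ((0 < r ∧ r < ρ) ∨ ρ < r) →
      DifferentiableAt ℝ f r ∧ DifferentiableAt ℝ (deriv f) r ∧
      deriv (deriv f) r + deriv f r / r
        + ((if r < ρ then a^2 else 0) - (ℓ:ℝ)^2 / r^2) * f r = 0) ∧
    MeasureTheory.IntegrableOn (fun r => (f r)^2 * r) (Set.Ioi 0) := by
  obtain ⟨m, rfl⟩ : ∃ m, ℓ = m + 2 := ⟨ℓ - 2, by omega⟩
  have hm1 : m + 2 - 1 = m + 1 := rfl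
  rw [hm1] at hJ1
  have hρ0 : ρ ≠ 0 := ne_of_gt hρ
  have ha0 : a ≠ 0 := ne_of_gt ha
  have haρ : a * ρ ≠ 0 := mul_ne_zero ha0 hρ0
  set c := besselJr (m+2) (a*ρ) with hc
  -- inside comparison function
  have hgin : ∀ r : ℝ, HasDerivAt (fun y => besselJr (m+2) (a*y) / c)
      (a * dJ (m+2) (a*r) / c) r := by
    intro r
    have h1 : HasDerivAt (fun y : ℝ => a * y) a r := by
      simpa using (hasDerivAt_id r).const_mul a
    have h2 := ((hasDerivAt_besselJr (m+2) (a*r)).comp r h1).div_const c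
    refine h2.congr_deriv ?_
    ring
  -- outside comparison function
  have hgout : ∀ r : ℝ, r ≠ 0 → HasDerivAt (fun y : ℝ => ρ^(m+2) * y ^ (-(m+2:ℤ)))
      (ρ^(m+2) * (-((m:ℝ)+2)) * r ^ (-(m+2:ℤ)-1)) r := by
    intro r hr
    have := (hasDerivAt_zpow (-(m+2:ℤ)) r (Or.inl hr)).const_mul (ρ^(m+2))
    refine this.congr_deriv ?_
    push_cast
    ring
  have hgout_eq : ∀ r : ℝ, r ≠ 0 → ρ^(m+2) * r ^ (-(m+2:ℤ)) = (ρ/r)^(m+2) := by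
    intro r hr
    rw [div_pow, zpow_neg, show ((m:ℤ)+2) = ((m+2:ℕ):ℤ) by push_cast; ring,
      zpow_natCast, div_eq_mul_inv]
  have hfρ : f ρ = 1 := by rw [hfin ρ hρ le_rfl]; exact div_self hJ2
  have hEin : Set.EqOn f (fun y => besselJr (m+2) (a*y) / c) (Set.Ioc 0 ρ) := fun r hr => by
    simpa using hfin r hr.1 hr.2
  have hEout : Set.EqOn f (fun y : ℝ => ρ^(m+2) * y ^ (-(m+2:ℤ))) (Set.Ici ρ) := by
    intro r hr
    rcases eq_or_lt_of_le (Set.mem_Ici.mp hr) with rfl | hlt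
    · show f ρ = ρ^(m+2) * ρ ^ (-(m+2:ℤ))
      rw [hgout_eq ρ hρ0, hfρ, div_self hρ0, one_pow]
    · simp only []
      rw [hgout_eq r (hρ.trans hlt).ne', hfout r hlt]
  have hdρ_in : a * dJ (m+2) (a*ρ) / c = -((m:ℝ)+2)/ρ := by
    rw [show dJ (m+2) = dJ ((m+1)+1) from rfl, dJ_eq_A (m+1) haρ, hJ1, hc]
    have hJ2' : besselJr (m+2) (a*ρ) ≠ 0 := hJ2
    push_cast
    field_simp
    ring
  have hdρ_out : ρ^(m+2) * (-((m:ℝ)+2)) * ρ ^ (-(m+2:ℤ)-1) = -((m:ℝ)+2)/ρ := by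
    rw [zpow_sub₀ hρ0, zpow_neg, show ((m:ℤ)+2) = ((m+2:ℕ):ℤ) by push_cast; ring,
      zpow_natCast, zpow_one]
    field_simp
  -- f is differentiable on Ioi 0, with one-sided agreement at ρ
  have hfd1 : ∀ r : ℝ, 0 < r → r ≤ ρ → HasDerivAt f (a * dJ (m+2) (a*r) / c) r := by
    intro r hr hrρ
    rcases eq_or_lt_of_le hrρ with rfl | hlt
    · -- r = ρ
      have h1 : HasDerivWithinAt f (-((m:ℝ)+2)/r) (Set.Ioc 0 r) r := by
        have h := ((hgin r).hasDerivWithinAt (s := Set.Ioc 0 r))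
        rw [hdρ_in] at h
        exact h.congr (fun y hy => hEin hy) (hEin ⟨hr, le_rfl⟩)
      have h2 : HasDerivWithinAt f (-((m:ℝ)+2)/r) (Set.Ici r) r := by
        have h := ((hgout r hr.ne').hasDerivWithinAt (s := Set.Ici r))
        rw [hdρ_out] at h
        exact h.congr (fun y hy => hEout hy) (hEout Set.self_mem_Ici)
      have h3 := h1.union h2
      rw [Set.Ioc_union_Ici_eq_Ioi hr] at h3
      have h4 := h3.hasDerivAt (Ioi_mem_nhds hr)
      rwa [hdρ_in]
    · have hne : Set.Ioo (0:ℝ) ρ ∈ 𝓝 r := isOpen_Ioo.mem_nhds ⟨hr, hlt⟩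
      refine (hgin r).congr_of_eventuallyEq ?_
      filter_upwards [hne] with y hy using hEin ⟨hy.1, hy.2.le⟩
  have hfd2 : ∀ r : ℝ, ρ < r → HasDerivAt f (ρ^(m+2) * (-((m:ℝ)+2)) * r ^ (-(m+2:ℤ)-1)) r := by
    intro r hgt
    have hne : Set.Ioi ρ ∈ 𝓝 r := isOpen_Ioi.mem_nhds hgt
    refine (hgout r (hρ.trans hgt).ne').congr_of_eventuallyEq ?_
    filter_upwards [hne] with y hy using hEout (Set.mem_Ici.mpr (le_of_lt hy))
  have hderiv1 : ∀ r : ℝ, 0 < r → r ≤ ρ → deriv f r = a * dJ (m+2) (a*r) / c :=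
    fun r hr hrρ => (hfd1 r hr hrρ).deriv
  have hderiv2 : ∀ r : ℝ, ρ < r → deriv f r = ρ^(m+2) * (-((m:ℝ)+2)) * r ^ (-(m+2:ℤ)-1) :=
    fun r hr => (hfd2 r hr).deriv
  -- continuity of the two derivative expressions
  have hG1cont : ∀ r : ℝ, 0 < r → ContinuousAt (fun y => a * dJ (m+2) (a*y) / c) r := by
    intro r hr
    have hx : a * r ≠ 0 := mul_ne_zero ha0 hr.ne'
    have h1 : ContinuousAt (fun y : ℝ => dJ (m+2) (a*y)) r := by
      have hd : ContinuousAt (dJ (m+2)) (a*r) :=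
        (hasDerivAt_dJ (m+1) hx).differentiableAt.continuousAt
      exact hd.comp ((continuous_const.mul continuous_id).continuousAt)
    exact (continuousAt_const.mul h1).div_const c
  have hG2cont : ∀ r : ℝ, 0 < r →
      ContinuousAt (fun y : ℝ => ρ^(m+2) * (-((m:ℝ)+2)) * y ^ (-(m+2:ℤ)-1)) r := by
    intro r hr
    exact continuousAt_const.mul (continuousAt_zpow₀ r _ (Or.inl hr.ne'))
  -- continuity of deriv f on Ioi 0
  have hdcont : ContinuousOn (deriv f) (Set.Ioi 0) := by
    intro r hr
    simp only [Set.mem_Ioi] at hr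
    rcases lt_trichotomy r ρ with hlt | rfl | hgt
    · refine ((hG1cont r hr).congr ?_).continuousWithinAt
      filter_upwards [isOpen_Ioo.mem_nhds (⟨hr, hlt⟩ : r ∈ Set.Ioo (0:ℝ) ρ)] with y hy
      exact (hderiv1 y hy.1 hy.2.le).symm
    · have hc1 : ContinuousWithinAt (deriv f) (Set.Ioc 0 r) r := by
        refine ((hG1cont r hr).continuousWithinAt).congr ?_ ?_
        · exact fun y hy => hderiv1 y hy.1 hy.2
        · exact hderiv1 r hr le_rfl
      have hc2 : ContinuousWithinAt (deriv f) (Set.Ici r) r := by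
        refine ((hG2cont r hr).continuousWithinAt).congr ?_ ?_
        · intro y hy
          rcases eq_or_lt_of_le (Set.mem_Ici.mp hy) with heq | hlt
          · rw [← heq, hderiv1 r hr le_rfl, hdρ_in, ← hdρ_out]
          · exact hderiv2 y hlt
        · rw [hderiv1 r hr le_rfl, hdρ_in, ← hdρ_out]
      have := hc1.union hc2
      rw [Set.Ioc_union_Ici_eq_Ioi hr] at this
      exact this
    · refine ((hG2cont r hr).congr ?_).continuousWithinAt
      filter_upwards [isOpen_Ioi.mem_nhds hgt] with y hy
      exact (hderiv2 y hy).symm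
  refine ⟨?_, ?_, ?_⟩
  · -- C¹
    have h01 : ((0:ℕ) : WithTop ℕ∞) + 1 = 1 := by norm_num
    rw [← h01, contDiffOn_succ_iff_deriv_of_isOpen isOpen_Ioi]
    refine ⟨?_, ?_, ?_⟩
    · intro r hr
      rcases le_or_gt r ρ with h | h
      · exact (hfd1 r hr h).differentiableAt.differentiableWithinAt
      · exact (hfd2 r h).differentiableAt.differentiableWithinAt
    · intro h
      exact absurd h (by simp)
    · rw [show ((0:ℕ) : WithTop ℕ∞) = 0 from rfl, contDiffOn_zero]
      exact hdcont
  · -- the ODE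
    intro r hcase
    rcases hcase with ⟨hr, hlt⟩ | hgt
    · -- inside
      have hx : a * r ≠ 0 := mul_ne_zero ha0 hr.ne'
      have hev : deriv f =ᶠ[𝓝 r] (fun y => a * dJ (m+2) (a*y) / c) := by
        filter_upwards [isOpen_Ioo.mem_nhds (⟨hr, hlt⟩ : r ∈ Set.Ioo (0:ℝ) ρ)] with y hy
        exact hderiv1 y hy.1 hy.2.le
      have hmul : HasDerivAt (fun y : ℝ => a * y) a r := by
        simpa using (hasDerivAt_id r).const_mul a
      have hG1d : HasDerivAt (fun y => a * dJ (m+2) (a*y) / c)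
          (a * ((-(dJ (m+2) (a*r) / (a*r)) - (1 - ((m:ℝ)+2)^2/(a*r)^2) * besselJr (m+2) (a*r)) * a) / c) r := by
        have h0 : HasDerivAt (dJ (m+2))
            (-(dJ (m+2) (a*r) / (a*r)) - (1 - ((m:ℝ)+2)^2/(a*r)^2) * besselJr (m+2) (a*r)) (a*r) := by
          have := hasDerivAt_dJ (m+1) hx
          push_cast at this ⊢
          convert this using 2 <;> push_cast <;> ring
        exact ((h0.comp r hmul).const_mul a).div_const c
      refine ⟨(hfd1 r hr hlt.le).differentiableAt, ?_, ?_⟩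
      · exact (hev.differentiableAt_iff).mpr hG1d.differentiableAt
      · rw [hev.deriv_eq, hG1d.deriv, hderiv1 r hr hlt.le, hfin r hr hlt.le, if_pos hlt]
        push_cast
        field_simp
        ring
    · -- outside
      have hr0 : (0:ℝ) < r := hρ.trans hgt
      have hev : deriv f =ᶠ[𝓝 r] (fun y : ℝ => ρ^(m+2) * (-((m:ℝ)+2)) * y ^ (-(m+2:ℤ)-1)) := by
        filter_upwards [isOpen_Ioi.mem_nhds hgt] with y hy
        exact hderiv2 y hy
      have hG2d : HasDerivAt (fun y : ℝ => ρ^(m+2) * (-((m:ℝ)+2)) * y ^ (-(m+2:ℤ)-1))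
          (ρ^(m+2) * (-((m:ℝ)+2)) * (((-(m+2:ℤ)-1 : ℤ):ℝ) * r ^ (-(m+2:ℤ)-1-1))) r :=
        (hasDerivAt_zpow (-(m+2:ℤ)-1) r (Or.inl hr0.ne')).const_mul _
      refine ⟨(hfd2 r hgt).differentiableAt, ?_, ?_⟩
      · exact (hev.differentiableAt_iff).mpr hG2d.differentiableAt
      · rw [hev.deriv_eq, hG2d.deriv, hderiv2 r hgt, if_neg (not_lt.mpr hgt.le),
          hfout r hgt, ← hgout_eq r hr0.ne']
        have hz0 : r ^ (-(m+2:ℤ)) = (r^(m+2))⁻¹ := by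
          rw [zpow_neg, show ((m:ℤ)+2) = ((m+2:ℕ):ℤ) by push_cast; ring, zpow_natCast]
        have hz1 : r ^ (-(m+2:ℤ)-1) = (r^(m+2))⁻¹ / r := by
          rw [zpow_sub₀ hr0.ne', hz0, zpow_one]
        have hz2 : r ^ (-(m+2:ℤ)-1-1) = (r^(m+2))⁻¹ / r / r := by
          rw [zpow_sub₀ hr0.ne', hz1, zpow_one]
        rw [hz0, hz1, hz2]
        push_cast
        field_simp
        ring
  · -- integrability
    rw [← Set.Ioc_union_Ioi_eq_Ioi hρ.le]
    apply MeasureTheory.IntegrableOn.union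
    · -- on Ioc 0 ρ
      have hcont : Continuous (fun r : ℝ => (besselJr (m+2) (a*r) / c)^2 * r) := by
        apply Continuous.mul _ continuous_id
        exact (((continuous_besselJr (m+2)).comp (continuous_const.mul continuous_id)).div_const c).pow 2
      have h1 : MeasureTheory.IntegrableOn (fun r : ℝ => (besselJr (m+2) (a*r) / c)^2 * r)
          (Set.Ioc 0 ρ) := hcont.integrableOn_Ioc
      refine h1.congr_fun ?_ measurableSet_Ioc
      intro r hr
      simp only []
      rw [hfin r hr.1 hr.2]
    · -- on Ioi ρ
      have h2 : MeasureTheory.IntegrableOn (fun r : ℝ => ρ^(2*m+4) * r ^ ((-(2*(m:ℝ))-3) : ℝ))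
          (Set.Ioi ρ) := by
        apply MeasureTheory.Integrable.const_mul
        exact (integrableOn_Ioi_rpow_iff hρ).mpr (by push_cast; linarith [Nat.cast_nonneg (α := ℝ) m])
      refine h2.congr_fun ?_ measurableSet_Ioi
      intro r hr
      have hr0 : (0:ℝ) < r := hρ.trans hr
      simp only []
      rw [hfout r hr]
      have he : ((-(2*(m:ℝ))-3) : ℝ) = ((-(2*(m:ℤ))-3 : ℤ) : ℝ) := by push_cast; ring
      rw [he, Real.rpow_intCast]
      have hz : r ^ ((-(2*(m:ℤ))-3 : ℤ)) = (r^(2*m+3))⁻¹ := by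
        rw [show ((-(2*(m:ℤ))-3 : ℤ)) = -(2*(m:ℤ)+3) by ring, zpow_neg, ← zpow_natCast]
        norm_num
      rw [hz, div_pow]
      field_simp
      ring
end

section
/- Let a, ρ > 0 satisfy J_0(aρ) = 0 and J_1(aρ) ≠ 0. Define f : (0,∞) → ℝ by f(r) = J_1(ar)/J_1(aρ) for 0 < r ≤ ρ and f(r) = ρ/r for r > ρ. Then f is continuously differentiable on (0,∞); f is twice differentiable on (0,ρ) and on (ρ,∞), where it satisfies f″(r) + f′(r)/r + (a²·𝟙_{r<ρ} − 1/r²)·f(r) = 0; and r·f(r) → ρ as r → ∞, so f(r) = O(1/r) but f(r) is not O(1/r²). (Thus (r,θ) ↦ f(r)e^{iθ} is a p-resonant state at zero energy for −Δ − a²·𝟙_{|x|≤ρ} on ℝ².) -/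
open scoped Real Topology
open Filter Asymptotics

namespace BesselAux

/-- master summable bound -/
lemma summable_bound (ℓ : ℕ) (M : ℝ) (hM : 0 ≤ M) :
    Summable (fun k : ℕ => ((2*(k:ℝ)+ℓ+1)) * M^(2*k+ℓ) /
      ((Nat.factorial k : ℝ) * (Nat.factorial (k+ℓ) : ℝ))) := by
  have h := (Real.summable_pow_div_factorial ((2*M)^2)).mul_left (2*(2*M)^ℓ)
  refine Summable.of_nonneg_of_le (fun k => by positivity) (fun k => ?_) h
  have e : 2*(2*M)^ℓ * (((2*M)^2)^k / (Nat.factorial k : ℝ))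
      = (2:ℝ)^(2*k+ℓ+1) * M^(2*k+ℓ) / (Nat.factorial k : ℝ) := by
    simp only [← pow_mul, pow_add, mul_pow, pow_succ, pow_mul]
    ring
  rw [e]
  have h1 : (2*(k:ℝ)+ℓ+1) ≤ (2:ℝ)^(2*k+ℓ+1) := by
    have h0 := (Nat.lt_two_pow_self (n := 2*k+ℓ+1)).le
    calc (2*(k:ℝ)+ℓ+1) = ((2*k+ℓ+1 : ℕ) : ℝ) := by push_cast; ring
      _ ≤ (((2:ℕ)^(2*k+ℓ+1) : ℕ) : ℝ) := by exact_mod_cast h0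
      _ = (2:ℝ)^(2*k+ℓ+1) := by push_cast; ring
  have h2 : (1:ℝ) ≤ (Nat.factorial (k+ℓ) : ℝ) := by
    exact_mod_cast Nat.one_le_iff_ne_zero.mpr (Nat.factorial_ne_zero _)
  have hfk : (0:ℝ) < (Nat.factorial k : ℝ) := by exact_mod_cast Nat.factorial_pos k
  calc (2*(k:ℝ)+ℓ+1) * M^(2*k+ℓ) / ((Nat.factorial k : ℝ) * (Nat.factorial (k+ℓ) : ℝ))
      ≤ (2:ℝ)^(2*k+ℓ+1) * M^(2*k+ℓ) / ((Nat.factorial k : ℝ) * 1) := by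
        gcongr
    _ = (2:ℝ)^(2*k+ℓ+1) * M^(2*k+ℓ) / (Nat.factorial k : ℝ) := by rw [mul_one]

lemma norm_term_le (ℓ k : ℕ) (x M : ℝ) (hM1 : 1 ≤ M) (hxM : |x/2| ≤ M) :
    ‖((-1 : ℝ)^k / ((Nat.factorial k : ℝ) * (Nat.factorial (k + ℓ) : ℝ))) * (x/2)^(2*k + ℓ)‖
      ≤ ((2*(k:ℝ)+ℓ+1)) * M^(2*k+ℓ) / ((Nat.factorial k : ℝ) * (Nat.factorial (k+ℓ) : ℝ)) := by
  have hfac : (0:ℝ) < (Nat.factorial k : ℝ) * (Nat.factorial (k+ℓ) : ℝ) := by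
    have := Nat.factorial_pos k; have := Nat.factorial_pos (k+ℓ); positivity
  have e : ‖((-1 : ℝ)^k / ((Nat.factorial k : ℝ) * (Nat.factorial (k + ℓ) : ℝ))) * (x/2)^(2*k + ℓ)‖
      = |x/2|^(2*k+ℓ) / ((Nat.factorial k : ℝ) * (Nat.factorial (k+ℓ) : ℝ)) := by
    rw [Real.norm_eq_abs, abs_mul, abs_div, abs_pow, abs_pow, abs_neg, abs_one, one_pow,
      abs_of_pos hfac, div_mul_eq_mul_div, one_mul]
  rw [e]
  have h1 : |x/2|^(2*k+ℓ) ≤ M^(2*k+ℓ) := pow_le_pow_left₀ (abs_nonneg _) hxM _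
  have h2 : M^(2*k+ℓ) ≤ (2*(k:ℝ)+ℓ+1) * M^(2*k+ℓ) := by
    nlinarith [pow_nonneg (le_trans zero_le_one hM1) (2*k+ℓ), Nat.cast_nonneg (α := ℝ) k, Nat.cast_nonneg (α := ℝ) ℓ]
  gcongr
  exact h1.trans h2


lemma summable_term (ℓ : ℕ) (x : ℝ) :
    Summable (fun k : ℕ => ((-1 : ℝ)^k / ((Nat.factorial k : ℝ) * (Nat.factorial (k + ℓ) : ℝ))) * (x/2)^(2*k + ℓ)) := by
  set M : ℝ := max 1 |x/2| with hM
  have hM1 : (1:ℝ) ≤ M := le_max_left _ _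
  exact Summable.of_norm (Summable.of_nonneg_of_le (fun k => norm_nonneg _)
    (fun k => norm_term_le ℓ k x M hM1 (le_max_right _ _))
    (summable_bound ℓ M (zero_le_one.trans hM1)))

/-- derivative series of `besselJr ℓ` -/
noncomputable def JD (ℓ : ℕ) (x : ℝ) : ℝ :=
  ∑' k : ℕ, ((-1 : ℝ)^k / ((Nat.factorial k : ℝ) * (Nat.factorial (k + ℓ) : ℝ)))
    * ((2*k+ℓ : ℕ) : ℝ) * (x/2)^(2*k+ℓ-1) / 2

lemma term_hasDerivAt (c : ℝ) (n : ℕ) (x : ℝ) :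
    HasDerivAt (fun y : ℝ => c * (y/2)^n) (c * (n:ℝ) * (x/2)^(n-1) / 2) x := by
  have h0 : HasDerivAt (fun y : ℝ => y/2) (1/2 : ℝ) x := (hasDerivAt_id x).div_const 2
  have h : HasDerivAt (fun y : ℝ => (y/2)^n) ((n:ℝ) * (x/2)^(n-1) * (1/2)) x :=
    (hasDerivAt_pow n (x/2)).comp x h0
  have h2 := h.const_mul c
  refine h2.congr_deriv ?_
  ring

lemma norm_dterm_le (ℓ k : ℕ) (y M : ℝ) (hM1 : 1 ≤ M) (hxM : |y/2| ≤ M) :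
    ‖((-1 : ℝ)^k / ((Nat.factorial k : ℝ) * (Nat.factorial (k + ℓ) : ℝ)))
        * ((2*k+ℓ : ℕ) : ℝ) * (y/2)^(2*k+ℓ-1) / 2‖
      ≤ ((2*(k:ℝ)+ℓ+1)) * M^(2*k+ℓ) / ((Nat.factorial k : ℝ) * (Nat.factorial (k+ℓ) : ℝ)) := by
  have hfac : (0:ℝ) < (Nat.factorial k : ℝ) * (Nat.factorial (k+ℓ) : ℝ) := by
    have := Nat.factorial_pos k; have := Nat.factorial_pos (k+ℓ); positivity
  have hM0 : (0:ℝ) ≤ M := zero_le_one.trans hM1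
  have e : ‖((-1 : ℝ)^k / ((Nat.factorial k : ℝ) * (Nat.factorial (k + ℓ) : ℝ)))
        * ((2*k+ℓ : ℕ) : ℝ) * (y/2)^(2*k+ℓ-1) / 2‖
      = ((2*k+ℓ : ℕ) : ℝ) * |y/2|^(2*k+ℓ-1) / 2 / ((Nat.factorial k : ℝ) * (Nat.factorial (k+ℓ) : ℝ)) := by
    rw [Real.norm_eq_abs, abs_div, abs_mul, abs_mul, abs_div, abs_pow, abs_pow, abs_neg, abs_one,
      one_pow, abs_of_pos hfac, abs_of_nonneg (Nat.cast_nonneg _), abs_of_pos (by norm_num : (0:ℝ) < 2)]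
    ring
  rw [e]
  gcongr
  have h1 : |y/2|^(2*k+ℓ-1) ≤ M^(2*k+ℓ-1) := pow_le_pow_left₀ (abs_nonneg _) hxM _
  have h2 : M^(2*k+ℓ-1) ≤ M^(2*k+ℓ) := pow_le_pow_right₀ hM1 (Nat.sub_le _ _)
  have h3 : ((2*k+ℓ : ℕ) : ℝ) ≤ 2*(k:ℝ)+ℓ+1 := by push_cast; linarith
  have h4 : (0:ℝ) ≤ ((2*k+ℓ : ℕ) : ℝ) := Nat.cast_nonneg _
  have h5 : (0:ℝ) ≤ |y/2|^(2*k+ℓ-1) := by positivity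
  calc ((2*k+ℓ : ℕ) : ℝ) * |y/2|^(2*k+ℓ-1) / 2
      ≤ ((2*k+ℓ : ℕ) : ℝ) * |y/2|^(2*k+ℓ-1) := by
        nlinarith [mul_nonneg h4 h5]
    _ ≤ (2*(k:ℝ)+ℓ+1) * M^(2*k+ℓ) := by
        have := mul_le_mul h3 (h1.trans h2) h5 (by linarith)
        exact this
  
lemma summable_dterm (ℓ : ℕ) (x : ℝ) :
    Summable (fun k : ℕ => ((-1 : ℝ)^k / ((Nat.factorial k : ℝ) * (Nat.factorial (k + ℓ) : ℝ)))
      * ((2*k+ℓ : ℕ) : ℝ) * (x/2)^(2*k+ℓ-1) / 2) := by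
  set M : ℝ := max 1 |x/2| with hM
  have hM1 : (1:ℝ) ≤ M := le_max_left _ _
  exact Summable.of_norm (Summable.of_nonneg_of_le (fun k => norm_nonneg _)
    (fun k => norm_dterm_le ℓ k x M hM1 (le_max_right _ _))
    (summable_bound ℓ M (zero_le_one.trans hM1)))

lemma besselJr_hasDerivAt (ℓ : ℕ) (x : ℝ) :
    HasDerivAt (besselJr ℓ) (JD ℓ x) x := by
  set R : ℝ := |x| + 1 with hR
  set M : ℝ := max 1 (R/2) with hM
  have hM1 : (1:ℝ) ≤ M := le_max_left _ _
  have hx : x ∈ Metric.ball (0:ℝ) R := by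
    rw [Metric.mem_ball, Real.dist_eq, sub_zero, hR]
    linarith
  have h := hasDerivAt_tsum_of_isPreconnected
    (u := fun k : ℕ => ((2*(k:ℝ)+ℓ+1)) * M^(2*k+ℓ) / ((Nat.factorial k : ℝ) * (Nat.factorial (k+ℓ) : ℝ)))
    (g := fun k y => ((-1 : ℝ)^k / ((Nat.factorial k : ℝ) * (Nat.factorial (k + ℓ) : ℝ))) * (y/2)^(2*k + ℓ))
    (g' := fun k y => ((-1 : ℝ)^k / ((Nat.factorial k : ℝ) * (Nat.factorial (k + ℓ) : ℝ)))
      * ((2*k+ℓ : ℕ) : ℝ) * (y/2)^(2*k+ℓ-1) / 2)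
    (summable_bound ℓ M (zero_le_one.trans hM1))
    Metric.isOpen_ball (convex_ball (0:ℝ) R).isPreconnected
    (fun k y _ => term_hasDerivAt _ _ y)
    (fun k y hy => by
      refine norm_dterm_le ℓ k y M hM1 ?_
      have : |y| < R := by simpa [Real.dist_eq] using hy
      have h2 : |y/2| ≤ R/2 := by rw [abs_div]; simp; cases abs_cases y <;> linarith
      exact h2.trans (le_max_right _ _))
    hx (summable_term ℓ x) hx
  exact h


lemma JD_zero (x : ℝ) : JD 0 x = - besselJr 1 x := by
  rw [JD, (summable_dterm 0 x).tsum_eq_zero_add, besselJr, ← tsum_neg]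
  have h0 : ((-1 : ℝ)^0 / ((Nat.factorial 0 : ℝ) * (Nat.factorial (0 + 0) : ℝ)))
      * ((2*0+0 : ℕ) : ℝ) * (x/2)^(2*0+0-1) / 2 = 0 := by norm_num
  rw [h0, zero_add]
  apply tsum_congr
  intro k
  have he : 2*(k+1)+0-1 = 2*k+1 := by omega
  have he2 : 2*(k+1)+0 = 2*k+2 := by omega
  rw [he, he2]
  have hf1 : ((Nat.factorial k : ℝ)) ≠ 0 := by exact_mod_cast (Nat.factorial_ne_zero k)
  have hf2 : ((Nat.factorial (k+1) : ℝ)) ≠ 0 := by exact_mod_cast (Nat.factorial_ne_zero (k+1))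
  push_cast [Nat.factorial_succ, pow_succ]
  field_simp

lemma JD_one (x : ℝ) (hx : x ≠ 0) : JD 1 x = besselJr 0 x - besselJr 1 x / x := by
  have hs0 := summable_term 0 x
  have hs1 := (summable_term 1 x).div_const x
  have hR : besselJr 0 x - besselJr 1 x / x
      = ∑' k : ℕ, (((-1 : ℝ)^k / ((Nat.factorial k : ℝ) * (Nat.factorial (k + 0) : ℝ))) * (x/2)^(2*k + 0)
        - ((-1 : ℝ)^k / ((Nat.factorial k : ℝ) * (Nat.factorial (k + 1) : ℝ))) * (x/2)^(2*k + 1) / x) := by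
    rw [besselJr, besselJr, ← tsum_div_const, ← Summable.tsum_sub hs0 hs1]
  rw [JD, hR]
  apply tsum_congr
  intro k
  have he : 2*k+1-1 = 2*k := by omega
  rw [he]
  have hf1 : ((Nat.factorial k : ℝ)) ≠ 0 := by exact_mod_cast (Nat.factorial_ne_zero k)
  have hf2 : ((Nat.factorial (k+1) : ℝ)) ≠ 0 := by exact_mod_cast (Nat.factorial_ne_zero (k+1))
  push_cast [Nat.factorial_succ, pow_succ]
  field_simp
  ring


lemma chain (a : ℝ) (ℓ : ℕ) (r : ℝ) :
    HasDerivAt (fun s => besselJr ℓ (a*s)) (a * JD ℓ (a*r)) r := by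
  have h0 : HasDerivAt (fun y : ℝ => a * y) a r := by
    simpa using (hasDerivAt_id r).const_mul a
  have h := (besselJr_hasDerivAt ℓ (a*r)).comp r h0
  simpa [Function.comp_def, mul_comm] using h

/-- the derivative of the inside profile -/
noncomputable def G (a ρ : ℝ) (r : ℝ) : ℝ :=
  (a * besselJr 0 (a*r) - besselJr 1 (a*r)/r)/besselJr 1 (a*ρ)

lemma F1_hasDerivAt (a ρ r : ℝ) (ha : a ≠ 0) (hr : r ≠ 0) :
    HasDerivAt (fun s => besselJr 1 (a*s) / besselJr 1 (a*ρ)) (G a ρ r) r := by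
  have h := (chain a 1 r).div_const (besselJr 1 (a*ρ))
  have e : a * JD 1 (a*r) / besselJr 1 (a*ρ) = G a ρ r := by
    rw [JD_one (a*r) (mul_ne_zero ha hr), G]
    congr 1
    field_simp
  exact e ▸ h

lemma G_hasDerivAt (a ρ r : ℝ) (hr : r ≠ 0) :
    HasDerivAt (G a ρ)
      ((a*(a * JD 0 (a*r)) - (a * JD 1 (a*r) * r - besselJr 1 (a*r) * 1)/r^2)/besselJr 1 (a*ρ)) r := by
  have h := (((chain a 0 r).const_mul a).sub ((chain a 1 r).div (hasDerivAt_id r) hr)).div_const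
    (besselJr 1 (a*ρ))
  exact h

lemma G_rho (a ρ : ℝ) (hρ : ρ ≠ 0) (hC : besselJr 1 (a*ρ) ≠ 0)
    (hJ0 : besselJr 0 (a*ρ) = 0) : G a ρ ρ = -(ρ/ρ^2) := by
  rw [G, hJ0]
  field_simp
  ring

lemma ODE_inside (a ρ r : ℝ) (ha : a ≠ 0) (hr : r ≠ 0) (hC : besselJr 1 (a*ρ) ≠ 0) :
    (a*(a * JD 0 (a*r)) - (a * JD 1 (a*r) * r - besselJr 1 (a*r) * 1)/r^2)/besselJr 1 (a*ρ)
      + G a ρ r / r + (a^2 - 1/r^2) * (besselJr 1 (a*r) / besselJr 1 (a*ρ)) = 0 := by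
  rw [G, JD_zero, JD_one (a*r) (mul_ne_zero ha hr)]
  field_simp
  ring

lemma rho_div_hasDerivAt (ρ r : ℝ) (hr : r ≠ 0) :
    HasDerivAt (fun s : ℝ => ρ/s) (-(ρ/r^2)) r := by
  have h := (hasDerivAt_inv hr).const_mul ρ
  have e : (fun s : ℝ => ρ * s⁻¹) = fun s : ℝ => ρ/s := by
    funext s; rw [div_eq_mul_inv]
  rw [e] at h
  refine h.congr_deriv ?_
  rw [div_eq_mul_inv]
  ring

lemma out_hasDerivAt (ρ r : ℝ) (hr : r ≠ 0) :
    HasDerivAt (fun s : ℝ => -(ρ/s^2)) (2*ρ/r^3) r := by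
  have hpow : HasDerivAt (fun s : ℝ => s^2) (2*r) r := by
    simpa using hasDerivAt_pow 2 r
  have h := ((hasDerivAt_const r ρ).div hpow (pow_ne_zero 2 hr)).neg
  refine h.congr_deriv ?_
  field_simp
  ring

end BesselAux

/-- p-resonant state at zero energy for the circular well. -/
theorem stmt_1 (a ρ : ℝ) (ha : 0 < a) (hρ : 0 < ρ)
    (hJ0 : besselJr 0 (a*ρ) = 0) (hJ1 : besselJr 1 (a*ρ) ≠ 0)
    (f : ℝ → ℝ)
    (hfin : ∀ r : ℝ, 0 < r → r ≤ ρ → f r = besselJr 1 (a*r) / besselJr 1 (a*ρ))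
    (hfout : ∀ r : ℝ, ρ < r → f r = ρ/r) :
    ContDiffOn ℝ 1 f (Set.Ioi 0) ∧
    (∀ r : ℝ, ((0 < r ∧ r < ρ) ∨ ρ < r) →
      DifferentiableAt ℝ f r ∧ DifferentiableAt ℝ (deriv f) r ∧
      deriv (deriv f) r + deriv f r / r
        + ((if r < ρ then a^2 else 0) - 1 / r^2) * f r = 0) ∧
    Filter.Tendsto (fun r => r * f r) Filter.atTop (nhds ρ) ∧
    f =O[Filter.atTop] (fun r : ℝ => 1/r) ∧
    ¬ (f =O[Filter.atTop] (fun r : ℝ => 1/r^2)) := by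
  have hρ' : ρ ≠ 0 := hρ.ne'
  have hC : besselJr 1 (a*ρ) ≠ 0 := hJ1
  have hfρ : f ρ = ρ/ρ := by
    rw [hfin ρ hρ le_rfl, div_self hJ1, div_self hρ']
  have hf_ge : ∀ s : ℝ, ρ ≤ s → f s = ρ/s := by
    intro s hs
    rcases eq_or_lt_of_le hs with h|h
    · rw [← h, hfρ]
    · exact hfout s h
  have hf_deriv : ∀ r : ℝ, 0 < r →
      HasDerivAt f (if r ≤ ρ then BesselAux.G a ρ r else -(ρ/r^2)) r := by
    intro r hr
    rcases lt_trichotomy r ρ with hlt|heq|hgt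
    · rw [if_pos hlt.le]
      have hev : f =ᶠ[𝓝 r] (fun s => besselJr 1 (a*s) / besselJr 1 (a*ρ)) := by
        filter_upwards [Ioo_mem_nhds hr hlt] with s hs
        exact hfin s hs.1 hs.2.le
      exact (BesselAux.F1_hasDerivAt a ρ r ha.ne' hr.ne').congr_of_eventuallyEq hev
    · subst heq
      rw [if_pos le_rfl]
      have h1 : HasDerivWithinAt f (BesselAux.G a r r) (Set.Ioc 0 r) r :=
        ((BesselAux.F1_hasDerivAt a r r ha.ne' hr.ne').hasDerivWithinAt).congr
          (fun s hs => hfin s hs.1 hs.2) (hfin r hr le_rfl)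
      have h2 : HasDerivWithinAt f (BesselAux.G a r r) (Set.Ici r) r := by
        rw [BesselAux.G_rho a r hr.ne' hC hJ0]
        exact ((BesselAux.rho_div_hasDerivAt r r hr.ne').hasDerivWithinAt).congr
          (fun s hs => hf_ge s hs) (hf_ge r le_rfl)
      have h3 := h1.union h2
      have hset : Set.Ioc 0 r ∪ Set.Ici r = Set.Ioi 0 := by
        ext x
        simp only [Set.mem_union, Set.mem_Ioc, Set.mem_Ici, Set.mem_Ioi]
        constructor
        · rintro (⟨h,_⟩|h)
          exacts [h, hr.trans_le h]
        · intro h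
          rcases le_or_gt x r with h'|h'
          exacts [Or.inl ⟨h, h'⟩, Or.inr h'.le]
      rw [hset] at h3
      exact h3.hasDerivAt (Ioi_mem_nhds hr)
    · rw [if_neg (not_le.mpr hgt)]
      have hev : f =ᶠ[𝓝 r] (fun s => ρ/s) := by
        filter_upwards [Ioi_mem_nhds hgt] with s hs
        exact hfout s hs
      exact (BesselAux.rho_div_hasDerivAt ρ r hr.ne').congr_of_eventuallyEq hev
  have hgcont : ContinuousOn (fun r => if r ≤ ρ then BesselAux.G a ρ r else -(ρ/r^2))
      (Set.Ioi 0) := by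
    intro r hr
    have hr0 : (0:ℝ) < r := hr
    apply ContinuousAt.continuousWithinAt
    rcases lt_trichotomy r ρ with hlt|heq|hgt
    · have hev : BesselAux.G a ρ =ᶠ[𝓝 r]
          (fun s => if s ≤ ρ then BesselAux.G a ρ s else -(ρ/s^2)) := by
        filter_upwards [Iio_mem_nhds hlt] with s hs
        rw [if_pos (le_of_lt hs)]
      exact ((BesselAux.G_hasDerivAt a ρ r hr0.ne').differentiableAt.continuousAt).congr hev
    · subst heq
      have cw1 : ContinuousWithinAt
          (fun s => if s ≤ r then BesselAux.G a r s else -(r/s^2)) (Set.Iic r) r := by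
        refine (((BesselAux.G_hasDerivAt a r r hρ').differentiableAt.continuousAt).continuousWithinAt).congr ?_ ?_
        · intro s hs
          exact if_pos hs
        · exact if_pos le_rfl
      have cw2 : ContinuousWithinAt
          (fun s => if s ≤ r then BesselAux.G a r s else -(r/s^2)) (Set.Ioi r) r := by
        have hcont : ContinuousAt (fun s : ℝ => -(r/s^2)) r :=
          (BesselAux.out_hasDerivAt r r hρ').differentiableAt.continuousAt
        refine (hcont.continuousWithinAt).congr ?_ ?_
        · intro s hs
          exact if_neg (not_le.mpr hs)
        · rw [if_pos le_rfl, BesselAux.G_rho a r hρ' hC hJ0]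
      have h := cw1.union cw2
      rw [Set.Iic_union_Ioi] at h
      exact (continuousWithinAt_univ _ _).mp h
    · have hev : (fun s : ℝ => -(ρ/s^2)) =ᶠ[𝓝 r]
          (fun s => if s ≤ ρ then BesselAux.G a ρ s else -(ρ/s^2)) := by
        filter_upwards [Ioi_mem_nhds hgt] with s hs
        rw [if_neg (not_le.mpr hs)]
      exact ((BesselAux.out_hasDerivAt ρ r hr0.ne').differentiableAt.continuousAt).congr hev
  have hev2 : f =ᶠ[atTop] (fun r : ℝ => ρ * (1/r)) := by
    filter_upwards [eventually_gt_atTop ρ] with r h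
    rw [hfout r h, ← mul_one_div]
  refine ⟨?_, ?_, ?_, ?_, ?_⟩
  · rw [← zero_add (1 : WithTop ℕ∞), contDiffOn_succ_iff_deriv_of_isOpen isOpen_Ioi]
    refine ⟨fun r hr => (hf_deriv r hr).differentiableAt.differentiableWithinAt, ?_, ?_⟩
    · intro h
      simp at h
    · rw [contDiffOn_zero]
      exact hgcont.congr (fun r hr => (hf_deriv r hr).deriv)
  · intro r hrc
    rcases hrc with ⟨hr0, hrlt⟩ | hgt
    · have hrρ : r ≤ ρ := hrlt.le
      have hev : deriv f =ᶠ[𝓝 r] BesselAux.G a ρ := by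
        filter_upwards [Ioo_mem_nhds hr0 hrlt] with s hs
        rw [(hf_deriv s hs.1).deriv, if_pos hs.2.le]
      have hGd := BesselAux.G_hasDerivAt a ρ r hr0.ne'
      refine ⟨(hf_deriv r hr0).differentiableAt,
        hGd.differentiableAt.congr_of_eventuallyEq hev, ?_⟩
      have e1 : deriv f r = BesselAux.G a ρ r := by
        rw [(hf_deriv r hr0).deriv, if_pos hrρ]
      rw [hev.deriv_eq, hGd.deriv, e1, if_pos hrlt, hfin r hr0 hrρ]
      exact BesselAux.ODE_inside a ρ r ha.ne' hr0.ne' hC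
    · have hr0 : 0 < r := hρ.trans hgt
      have hev : deriv f =ᶠ[𝓝 r] (fun s : ℝ => -(ρ/s^2)) := by
        filter_upwards [Ioi_mem_nhds hgt] with s hs
        rw [(hf_deriv s (hρ.trans hs)).deriv, if_neg (not_le.mpr hs)]
      have hGd := BesselAux.out_hasDerivAt ρ r hr0.ne'
      refine ⟨(hf_deriv r hr0).differentiableAt,
        hGd.differentiableAt.congr_of_eventuallyEq hev, ?_⟩
      have e1 : deriv f r = -(ρ/r^2) := by
        rw [(hf_deriv r hr0).deriv, if_neg (not_le.mpr hgt)]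
      rw [hev.deriv_eq, hGd.deriv, e1, if_neg (not_lt.mpr hgt.le), hfout r hgt]
      field_simp
      ring
  · have hev : (fun r : ℝ => ρ) =ᶠ[atTop] (fun r => r * f r) := by
      filter_upwards [eventually_gt_atTop ρ, eventually_gt_atTop 0] with r h1 h2
      rw [hfout r h1]
      field_simp
    exact tendsto_const_nhds.congr' hev
  · exact hev2.trans_isBigO ((isBigO_refl (fun r : ℝ => 1/r) atTop).const_mul_left ρ)
  · intro hbig
    have h2 : (fun r : ℝ => ρ * (1/r)) =O[atTop] (fun r : ℝ => 1/r^2) :=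
      hev2.symm.trans_isBigO hbig
    rw [isBigO_iff] at h2
    obtain ⟨c, hc⟩ := h2
    rw [eventually_atTop] at hc
    obtain ⟨N, hN⟩ := hc
    set r := max N (max 1 ((c+1)/ρ)) with hrdef
    have hr1 : (1:ℝ) ≤ r := le_trans (le_max_left _ _) (le_max_right _ _)
    have hr0 : (0:ℝ) < r := lt_of_lt_of_le one_pos hr1
    have hrN : N ≤ r := le_max_left _ _
    have hrc : (c+1)/ρ ≤ r := le_trans (le_max_right _ _) (le_max_right _ _)
    have h3 := hN r hrN
    rw [Real.norm_eq_abs, Real.norm_eq_abs, abs_of_pos (by positivity),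
      abs_of_pos (by positivity)] at h3
    have h4 : ρ * r ≤ c := by
      calc ρ * r = (ρ * (1/r)) * r^2 := by field_simp
        _ ≤ (c * (1/r^2)) * r^2 := mul_le_mul_of_nonneg_right h3 (sq_nonneg r)
        _ = c := by field_simp
    have h6 : c + 1 ≤ ρ * r := by
      rw [div_le_iff₀ hρ] at hrc
      linarith
    linarith
end

section
/- Let a, ρ > 0 satisfy J_1(aρ) = 0 and J_0(aρ) ≠ 0. Define f : (0,∞) → ℝ by f(r) = J_0(ar)/J_0(aρ) for 0 < r ≤ ρ and f(r) = 1 for r > ρ. Then f is continuously differentiable on (0,∞); f is twice differentiable on (0,ρ) and on (ρ,∞), where it satisfies f″(r) + f′(r)/r + a²·𝟙_{r<ρ}·f(r) = 0; and f is bounded with f(r) → 1 as r → ∞. (Thus f is an s-resonant state at zero energy for −Δ − a²·𝟙_{|x|≤ρ} on ℝ².) -/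
open scoped Real Topology
open Filter Asymptotics

lemma summable_dominated (c : ℕ → ℝ) (B q : ℝ)
    (h : ∀ k, |c k| ≤ B * (q^k / (Nat.factorial k : ℝ))) : Summable c := by
  apply Summable.of_abs
  exact Summable.of_nonneg_of_le (fun k => abs_nonneg _) h
    ((Real.summable_pow_div_factorial q).mul_left B)

lemma summable_at_pt (a : ℕ → ℝ) (d : ℕ → ℕ) (x R : ℝ) (hxR : |x| ≤ R)
    (h0 : Summable fun k => |a k| * R ^ d k) :
    Summable fun k => a k * x ^ d k := by
  refine Summable.of_norm_bounded h0 ?_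
  intro k
  rw [Real.norm_eq_abs, abs_mul, abs_pow]
  exact mul_le_mul_of_nonneg_left (pow_le_pow_left₀ (abs_nonneg x) hxR _) (abs_nonneg _)

lemma summable_at_pt' (a : ℕ → ℝ) (d : ℕ → ℕ) (x R : ℝ) (hxR : |x| ≤ R)
    (h1 : Summable fun k => |a k| * (d k : ℝ) * R ^ (d k - 1)) :
    Summable fun k => a k * ((d k : ℝ) * x ^ (d k - 1)) := by
  refine Summable.of_norm_bounded h1 ?_
  intro k
  rw [Real.norm_eq_abs, abs_mul, abs_mul, abs_pow, Nat.abs_cast, ← mul_assoc]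
  exact mul_le_mul_of_nonneg_left (pow_le_pow_left₀ (abs_nonneg x) hxR _)
    (mul_nonneg (abs_nonneg _) (Nat.cast_nonneg _))

lemma hasDerivAt_tsum_pow (a : ℕ → ℝ) (d : ℕ → ℕ) (x : ℝ)
    (h0 : ∀ R : ℝ, 0 < R → Summable fun k => |a k| * R ^ d k)
    (h1 : ∀ R : ℝ, 0 < R → Summable fun k => |a k| * (d k : ℝ) * R ^ (d k - 1)) :
    HasDerivAt (fun y => ∑' k, a k * y ^ d k)
      (∑' k, a k * ((d k : ℝ) * x ^ (d k - 1))) x := by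
  set R : ℝ := |x| + 1 with hR
  have hRpos : 0 < R := by positivity
  have hx : x ∈ Metric.ball (0:ℝ) R := by
    simp [Metric.mem_ball, Real.dist_eq, hR]
  refine hasDerivAt_of_tendstoUniformlyOn (l := (atTop : Filter ℕ)) (Metric.isOpen_ball)
    (f := fun N y => ∑ k ∈ Finset.range N, a k * y ^ d k)
    (f' := fun N y => ∑ k ∈ Finset.range N, a k * ((d k : ℝ) * y ^ (d k - 1)))
    (g' := fun y => ∑' k, a k * ((d k : ℝ) * y ^ (d k - 1)))
    ?_ ?_ ?_ hx
  · apply tendstoUniformlyOn_tsum_nat (h1 R hRpos)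
    intro k y hy
    rw [Real.norm_eq_abs, abs_mul, abs_mul, abs_pow, Nat.abs_cast, ← mul_assoc]
    have hyR : |y| ≤ R := by
      rw [Metric.mem_ball, Real.dist_eq, sub_zero] at hy
      exact hy.le
    exact mul_le_mul_of_nonneg_left (pow_le_pow_left₀ (abs_nonneg y) hyR _)
      (mul_nonneg (abs_nonneg _) (Nat.cast_nonneg _))
  · filter_upwards with N y _
    exact HasDerivAt.fun_sum fun k _ => (hasDerivAt_pow (d k) y).const_mul (a k)
  · intro y hy
    have hyR : |y| ≤ R := by
      rw [Metric.mem_ball, Real.dist_eq, sub_zero] at hy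
      exact hy.le
    exact (summable_at_pt a d y R hyR (h0 R hRpos)).hasSum.tendsto_sum_nat
noncomputable def a0 (k : ℕ) : ℝ :=
  (-1)^k / (((Nat.factorial k : ℝ) * (Nat.factorial k : ℝ)) * 4^k)

noncomputable def b1 (k : ℕ) : ℝ :=
  (-1)^k / (((Nat.factorial k : ℝ) * (Nat.factorial (k+1) : ℝ)) * (2 * 4^k))

lemma fact_ge_one (k : ℕ) : (1:ℝ) ≤ (Nat.factorial k : ℝ) := by
  exact_mod_cast Nat.one_le_iff_ne_zero.mpr (Nat.factorial_ne_zero k)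

lemma fact_pos (k : ℕ) : (0:ℝ) < (Nat.factorial k : ℝ) := by
  exact_mod_cast Nat.factorial_pos k

lemma abs_a0 (k : ℕ) : |a0 k| = 1 / (((Nat.factorial k : ℝ) * (Nat.factorial k : ℝ)) * 4^k) := by
  have h : (0:ℝ) < ((Nat.factorial k : ℝ) * (Nat.factorial k : ℝ)) * 4^k := by
    have := fact_pos k; positivity
  rw [a0, abs_div, abs_of_pos h, abs_pow, abs_neg, abs_one, one_pow]

lemma abs_b1 (k : ℕ) :
    |b1 k| = 1 / (((Nat.factorial k : ℝ) * (Nat.factorial (k+1) : ℝ)) * (2 * 4^k)) := by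
  have h : (0:ℝ) < ((Nat.factorial k : ℝ) * (Nat.factorial (k+1) : ℝ)) * (2 * 4^k) := by
    have := fact_pos k; have := fact_pos (k+1); positivity
  rw [b1, abs_div, abs_of_pos h, abs_pow, abs_neg, abs_one, one_pow]

lemma even_pow_nonneg (R : ℝ) (k : ℕ) : (0:ℝ) ≤ R ^ (2*k) := by
  rw [pow_mul]; positivity

lemma h0_a0 (R : ℝ) : Summable fun k => |a0 k| * R ^ (2*k) := by
  apply summable_dominated _ 1 (R^2/4)
  intro k
  have h1 := fact_ge_one k
  have hp := fact_pos k
  have h4 : (0:ℝ) < 4^k := by positivity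
  rw [abs_of_nonneg (mul_nonneg (abs_nonneg _) (even_pow_nonneg R k)), abs_a0, one_mul,
    div_pow, ← pow_mul, div_div, div_mul_eq_mul_div, one_mul]
  exact div_le_div_of_nonneg_left (even_pow_nonneg R k) (by positivity)
    (by nlinarith [mul_nonneg (mul_pos hp h4).le (sub_nonneg.mpr h1)])

lemma h1_a0 (R : ℝ) (hR : 0 < R) :
    Summable fun k => |a0 k| * ((2*k : ℕ) : ℝ) * R ^ (2*k - 1) := by
  apply summable_dominated _ (2 * max 1 R⁻¹) (R^2/4)
  intro k
  have h1 := fact_ge_one k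
  have hp := fact_pos k
  have h4 : (0:ℝ) < 4^k := by positivity
  have hRp : (0:ℝ) ≤ R ^ (2*k-1) := pow_nonneg hR.le _
  rw [abs_of_nonneg (mul_nonneg (mul_nonneg (abs_nonneg _) (Nat.cast_nonneg _)) hRp), abs_a0]
  rw [div_pow, ← pow_mul]
  have hM : (0:ℝ) ≤ max 1 R⁻¹ := le_trans zero_le_one (le_max_left _ _)
  have hRk : R ^ (2*k - 1) ≤ max 1 R⁻¹ * R ^ (2*k) := by
    rcases Nat.eq_zero_or_pos k with hk | hk
    · subst hk; simpa using le_max_left 1 R⁻¹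
    · have he : 2*k - 1 + 1 = 2*k := by omega
      calc R ^ (2*k-1) = R⁻¹ * R ^ (2*k) := by
            rw [← he, pow_succ]; field_simp; simp
        _ ≤ max 1 R⁻¹ * R ^ (2*k) :=
            mul_le_mul_of_nonneg_right (le_max_right _ _) (pow_nonneg hR.le _)
  calc 1 / ((Nat.factorial k : ℝ) * (Nat.factorial k : ℝ) * 4^k) * ((2*k : ℕ) : ℝ) * R ^ (2*k-1)
      ≤ 1 / ((Nat.factorial k : ℝ) * (Nat.factorial k : ℝ) * 4^k) * ((2*k : ℕ) : ℝ)
          * (max 1 R⁻¹ * R ^ (2*k)) :=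
        mul_le_mul_of_nonneg_left hRk (by positivity)
    _ = (2 * max 1 R⁻¹) * (((k:ℝ) / (Nat.factorial k : ℝ)) * (R^(2*k) / ((Nat.factorial k:ℝ) * 4^k))) := by
        push_cast; field_simp
    _ ≤ (2 * max 1 R⁻¹) * (1 * (R^(2*k) / ((Nat.factorial k:ℝ) * 4^k))) := by
        have hfrac : (k:ℝ) / (Nat.factorial k : ℝ) ≤ 1 := by
          rw [div_le_one hp]; exact_mod_cast Nat.self_le_factorial k
        have hX : (0:ℝ) ≤ R^(2*k) / ((Nat.factorial k:ℝ) * 4^k) := by positivity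
        exact mul_le_mul_of_nonneg_left (mul_le_mul_of_nonneg_right hfrac hX) (by positivity)
    _ = (2 * max 1 R⁻¹) * (R^(2*k) / 4^k / (Nat.factorial k : ℝ)) := by ring

lemma h0_b1 (R : ℝ) : Summable fun k => |b1 k| * R ^ (2*k+2) := by
  apply summable_dominated _ (R^2/2) (R^2/4)
  intro k
  have h1 := fact_ge_one (k+1)
  have hp := fact_pos k
  have hp1 := fact_pos (k+1)
  have h4 : (0:ℝ) < 4^k := by positivity
  have hRp : (0:ℝ) ≤ R ^ (2*k+2) := by
    have : 2*k+2 = 2*(k+1) := by omega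
    rw [this]; exact even_pow_nonneg R (k+1)
  have hfne : (Nat.factorial k : ℝ) ≠ 0 := ne_of_gt hp
  have hfne1 : (Nat.factorial (k+1) : ℝ) ≠ 0 := ne_of_gt hp1
  have h4ne : (4:ℝ)^k ≠ 0 := ne_of_gt h4
  rw [abs_of_nonneg (mul_nonneg (abs_nonneg _) hRp), abs_b1, div_pow, ← pow_mul]
  have he : R ^ (2*k+2) = R^2 * R^(2*k) := by rw [pow_add]; ring
  rw [he]
  calc 1 / ((Nat.factorial k : ℝ) * (Nat.factorial (k+1) : ℝ) * (2*4^k)) * (R^2 * R^(2*k))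
      = (R^2/2) * ((1/(Nat.factorial (k+1):ℝ)) * (R^(2*k) / ((Nat.factorial k:ℝ) * 4^k))) := by
        field_simp
        try ring
        try (left; trivial)
    _ ≤ (R^2/2) * (1 * (R^(2*k) / ((Nat.factorial k:ℝ) * 4^k))) := by
        have hfrac : 1/(Nat.factorial (k+1):ℝ) ≤ 1 := by
          rw [div_le_one hp1]; exact h1
        have hX : (0:ℝ) ≤ R^(2*k) / ((Nat.factorial k:ℝ) * 4^k) :=
          div_nonneg (even_pow_nonneg R k) (by positivity)
        exact mul_le_mul_of_nonneg_left (mul_le_mul_of_nonneg_right hfrac hX) (by positivity)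
    _ = (R^2/2) * (R^(2*k) / 4^k / (Nat.factorial k : ℝ)) := by ring

lemma h1_b1 (R : ℝ) (hR : 0 < R) :
    Summable fun k => |b1 k| * ((2*k+2 : ℕ) : ℝ) * R ^ (2*k+2 - 1) := by
  apply summable_dominated _ R (R^2/4)
  intro k
  have h1 := fact_ge_one k
  have hp := fact_pos k
  have hp1 := fact_pos (k+1)
  have h4 : (0:ℝ) < 4^k := by positivity
  have he : 2*k+2-1 = 2*k+1 := by omega
  have hRp : (0:ℝ) ≤ R ^ (2*k+1) := by positivity
  rw [he, abs_of_nonneg (mul_nonneg (mul_nonneg (abs_nonneg _) (Nat.cast_nonneg _)) hRp), abs_b1]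
  have hfs : (Nat.factorial (k+1) : ℝ) = ((k:ℝ)+1) * (Nat.factorial k : ℝ) := by
    rw [Nat.factorial_succ]; push_cast; ring
  have hRe : R ^ (2*k+1) = (R^2)^k * R := by
    rw [pow_succ, pow_mul]
  have heq : 1 / ((Nat.factorial k : ℝ) * (Nat.factorial (k+1) : ℝ) * (2*4^k))
        * ((2*k+2 : ℕ) : ℝ) * R ^ (2*k+1)
      = (R * ((R^2/4)^k / (Nat.factorial k : ℝ))) * (1/(Nat.factorial k : ℝ)) := by
    rw [hfs, hRe, div_pow, ← pow_mul]
    push_cast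
    field_simp
  rw [heq]
  have hfrac : 1/(Nat.factorial k:ℝ) ≤ 1 := by rw [div_le_one hp]; exact fact_ge_one k
  have hY : (0:ℝ) ≤ R * ((R^2/4)^k / (Nat.factorial k : ℝ)) := by positivity
  calc (R * ((R^2/4)^k / (Nat.factorial k : ℝ))) * (1/(Nat.factorial k : ℝ))
      ≤ (R * ((R^2/4)^k / (Nat.factorial k : ℝ))) * 1 :=
        mul_le_mul_of_nonneg_left hfrac hY
    _ = R * ((R^2/4)^k / (Nat.factorial k : ℝ)) := by ring

lemma besselJr_zero_eq (x : ℝ) : besselJr 0 x = ∑' k, a0 k * x^(2*k) := by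
  unfold besselJr
  apply tsum_congr
  intro k
  have h2 : (2:ℝ)^(2*k) = 4^k := by rw [pow_mul]; norm_num
  simp only [Nat.add_zero, add_zero]
  rw [div_pow, h2, a0]
  ring

lemma xJ1_eq (x : ℝ) : x * besselJr 1 x = ∑' k, b1 k * x^(2*k+2) := by
  unfold besselJr
  rw [← tsum_mul_left]
  apply tsum_congr
  intro k
  have h2 : (2:ℝ)^(2*k+1) = 2*4^k := by rw [pow_succ, pow_mul]; ring
  have hp := fact_pos k
  have hp1 := fact_pos (k+1)
  rw [div_pow, h2, b1]
  have hx : x^(2*k+2) = x * x^(2*k+1) := by rw [← pow_succ']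
  rw [hx]
  field_simp

lemma hasDerivAt_J0 (x : ℝ) : HasDerivAt (besselJr 0) (-(besselJr 1 x)) x := by
  have h := hasDerivAt_tsum_pow a0 (fun k => 2*k) x (fun R _ => h0_a0 R)
    (fun R hR => h1_a0 R hR)
  have hfun : (fun y => ∑' k, a0 k * y ^ (2*k)) = besselJr 0 := by
    funext y; exact (besselJr_zero_eq y).symm
  rw [hfun] at h
  convert h using 1
  have hR : (0:ℝ) < |x| + 1 := by positivity
  have hsum : Summable (fun k => a0 k * (((2*k:ℕ):ℝ) * x^(2*k-1))) :=
    summable_at_pt' a0 (fun k => 2*k) x (|x|+1) (by linarith) (h1_a0 _ hR)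
  rw [hsum.tsum_eq_zero_add]
  have h00 : a0 0 * (((2*0:ℕ):ℝ) * x^(2*0-1)) = 0 := by norm_num
  rw [h00, zero_add]
  unfold besselJr
  rw [← tsum_neg]
  apply tsum_congr
  intro k
  have hp := fact_pos k
  have hp1 := fact_pos (k+1)
  have h2 : (2:ℝ)^(2*k+1) = 2*4^k := by rw [pow_succ, pow_mul]; ring
  have he : 2*(k+1) - 1 = 2*k+1 := by omega
  have hfs : (Nat.factorial (k+1) : ℝ) = ((k:ℝ)+1) * (Nat.factorial k : ℝ) := by
    rw [Nat.factorial_succ]; push_cast; ring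
  rw [a0, he, div_pow, h2, hfs]
  have hn : ((2*(k+1) : ℕ) : ℝ) = 2*((k:ℝ)+1) := by push_cast; ring
  rw [hn, pow_succ (-1:ℝ) k, pow_succ (4:ℝ) k]
  field_simp
  ring

lemma hasDerivAt_xJ1 (x : ℝ) :
    HasDerivAt (fun y => y * besselJr 1 y) (x * besselJr 0 x) x := by
  have h := hasDerivAt_tsum_pow b1 (fun k => 2*k+2) x (fun R _ => h0_b1 R)
    (fun R hR => h1_b1 R hR)
  have hfun : (fun y => ∑' k, b1 k * y ^ (2*k+2)) = (fun y => y * besselJr 1 y) := by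
    funext y; exact (xJ1_eq y).symm
  rw [hfun] at h
  convert h using 1
  unfold besselJr
  rw [← tsum_mul_left]
  apply tsum_congr
  intro k
  have hp := fact_pos k
  have hp1 := fact_pos (k+1)
  have h2 : (2:ℝ)^(2*k) = 4^k := by rw [pow_mul]; norm_num
  have he : 2*k+2 - 1 = 2*k+1 := by omega
  have hfs : (Nat.factorial (k+1) : ℝ) = ((k:ℝ)+1) * (Nat.factorial k : ℝ) := by
    rw [Nat.factorial_succ]; push_cast; ring
  have hn : ((2*k+2 : ℕ) : ℝ) = 2*((k:ℝ)+1) := by push_cast; ring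
  simp only [Nat.add_zero, add_zero]
  rw [b1, he, div_pow, h2, hfs, hn]
  have hx : x^(2*k+1) = x * x^(2*k) := by rw [← pow_succ']
  rw [hx]
  field_simp

lemma hasDerivAt_J1 (x : ℝ) (hx : x ≠ 0) :
    HasDerivAt (besselJr 1) (besselJr 0 x - besselJr 1 x / x) x := by
  have h1 := (hasDerivAt_xJ1 x).div (hasDerivAt_id x) hx
  have hEq : besselJr 1 =ᶠ[𝓝 x] (fun y => (y * besselJr 1 y) / y) := by
    filter_upwards [compl_singleton_mem_nhds hx] with y hy
    rw [mul_comm, mul_div_assoc, div_self (by simpa using hy), mul_one]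
  have h2 := h1.congr_of_eventuallyEq hEq
  refine h2.congr_deriv ?_
  simp only [id]
  field_simp

lemma continuous_J0 : Continuous (besselJr 0) :=
  continuous_iff_continuousAt.mpr fun x => (hasDerivAt_J0 x).differentiableAt.continuousAt

/-- s-resonant state at zero energy for the circular well. -/
theorem stmt_2 (a ρ : ℝ) (ha : 0 < a) (hρ : 0 < ρ)
    (hJ1 : besselJr 1 (a*ρ) = 0) (hJ0 : besselJr 0 (a*ρ) ≠ 0)
    (f : ℝ → ℝ)
    (hfin : ∀ r : ℝ, 0 < r → r ≤ ρ → f r = besselJr 0 (a*r) / besselJr 0 (a*ρ))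
    (hfout : ∀ r : ℝ, ρ < r → f r = 1) :
    ContDiffOn ℝ 1 f (Set.Ioi 0) ∧
    (∀ r : ℝ, ((0 < r ∧ r < ρ) ∨ ρ < r) →
      DifferentiableAt ℝ f r ∧ DifferentiableAt ℝ (deriv f) r ∧
      deriv (deriv f) r + deriv f r / r
        + (if r < ρ then a^2 else 0) * f r = 0) ∧
    (∃ M : ℝ, ∀ r : ℝ, 0 < r → |f r| ≤ M) ∧
    Filter.Tendsto f Filter.atTop (nhds 1) := by
  set J : ℝ := besselJr 0 (a*ρ) with hJdef
  set F : ℝ → ℝ := fun r => besselJr 0 (a*r) / J with hFdef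
  -- derivative of F everywhere
  have hFr : ∀ r : ℝ, HasDerivAt F (-a * besselJr 1 (a*r) / J) r := by
    intro r
    have hinner : HasDerivAt (fun y : ℝ => a * y) a r := by
      simpa using (hasDerivAt_id r).const_mul a
    have h := ((hasDerivAt_J0 (a*r)).comp r hinner).div_const J
    refine h.congr_deriv ?_
    ring
  have hfρ : f ρ = 1 := by rw [hfin ρ hρ le_rfl, div_self hJ0]
  -- deriv function φ
  set φ : ℝ → ℝ := fun r => if r < ρ then -a * besselJr 1 (a*r) / J else 0 with hφdef
  have hDf : ∀ r ∈ Set.Ioi (0:ℝ), HasDerivAt f (φ r) r := by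
    intro r hr
    rw [Set.mem_Ioi] at hr
    rcases lt_trichotomy r ρ with hlt | heq | hgt
    · have hev : f =ᶠ[𝓝 r] F := by
        filter_upwards [Ioo_mem_nhds hr hlt] with s hs
        exact hfin s hs.1 hs.2.le
      have := (hFr r).congr_of_eventuallyEq hev
      simpa [hφdef, if_pos hlt] using this
    · subst heq
      have hF0 : HasDerivAt F 0 r := by
        have := hFr r
        rwa [hJ1, mul_zero, zero_div] at this
      have hIoc : HasDerivWithinAt f 0 (Set.Ioc 0 r) r :=
        (hF0.hasDerivWithinAt).congr (fun s hs => hfin s hs.1 hs.2) (hfin r hr le_rfl)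
      have hIci : HasDerivWithinAt f 0 (Set.Ici r) r := by
        refine (hasDerivWithinAt_const r _ 1).congr (fun s hs => ?_) hfρ
        rcases eq_or_lt_of_le (Set.mem_Ici.mp hs) with h | h
        · rw [← h]; exact hfρ
        · exact hfout s h
      have hmem : Set.Ioc 0 r ∪ Set.Ici r ∈ 𝓝 r := by
        apply Filter.mem_of_superset (Ioi_mem_nhds hr)
        intro y hy
        rcases le_or_gt y r with h | h
        · exact Or.inl ⟨hy, h⟩
        · exact Or.inr h.le
      have := (hIoc.union hIci).hasDerivAt hmem
      simpa [hφdef, lt_irrefl] using this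
    · have hev : f =ᶠ[𝓝 r] (fun _ => (1:ℝ)) := by
        filter_upwards [Ioi_mem_nhds hgt] with s hs
        exact hfout s hs
      have := (hasDerivAt_const r (1:ℝ)).congr_of_eventuallyEq hev
      simpa [hφdef, not_lt.mpr hgt.le] using this
  have hderiv_f : ∀ r ∈ Set.Ioi (0:ℝ), deriv f r = φ r := fun r hr => (hDf r hr).deriv
  have hdiff : DifferentiableOn ℝ f (Set.Ioi 0) :=
    fun r hr => (hDf r hr).differentiableAt.differentiableWithinAt
  -- continuity of φ on Ioi 0
  have hJ1cont : ∀ x : ℝ, x ≠ 0 → ContinuousAt (besselJr 1) x :=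
    fun x hx => (hasDerivAt_J1 x hx).differentiableAt.continuousAt
  have hφcont : ContinuousOn φ (Set.Ioi 0) := by
    have hψ : ContinuousOn (fun r => -a * besselJr 1 (a * min r ρ) / J) (Set.Ioi 0) := by
      apply ContinuousOn.div_const
      apply ContinuousOn.mul continuousOn_const
      apply ContinuousOn.comp (t := Set.Ioi (0:ℝ)) (fun x hx => (hJ1cont x (ne_of_gt hx)).continuousWithinAt)
      · exact (continuous_const.mul (continuous_id.min continuous_const)).continuousOn
      · intro r hr
        rw [Set.mem_Ioi] at hr ⊢
        exact mul_pos ha (lt_min hr hρ)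
    apply hψ.congr
    intro r hr
    rw [Set.mem_Ioi] at hr
    rcases lt_or_ge r ρ with h | h
    · rw [hφdef]; simp only [if_pos h, min_eq_left h.le]
    · rw [hφdef]
      simp only [if_neg (not_lt.mpr h), min_eq_right h]
      rw [hJ1, mul_zero, zero_div]
  constructor
  · -- ContDiffOn
    have h1 : (1 : WithTop ℕ∞) = 0 + 1 := by norm_num
    rw [h1, contDiffOn_succ_iff_deriv_of_isOpen isOpen_Ioi]
    refine ⟨hdiff, by simp, ?_⟩
    rw [contDiffOn_zero]
    exact ContinuousOn.congr hφcont hderiv_f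
  refine ⟨?_, ?_, ?_⟩
  · -- pointwise ODE
    intro r hr
    rcases hr with ⟨hr0, hrρ⟩ | hgt
    · have hDfr := hDf r hr0
      refine ⟨hDfr.differentiableAt, ?_, ?_⟩
      all_goals {
        have hev : deriv f =ᶠ[𝓝 r] (fun s => -a * besselJr 1 (a*s) / J) := by
          filter_upwards [Ioo_mem_nhds hr0 hrρ] with s hs
          rw [hderiv_f s hs.1, hφdef]
          simp only [if_pos hs.2]
        have harρ : a * r ≠ 0 := ne_of_gt (mul_pos ha hr0)
        have hinner : HasDerivAt (fun y : ℝ => a * y) a r := by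
          simpa using (hasDerivAt_id r).const_mul a
        have hψd : HasDerivAt (fun s => -a * besselJr 1 (a*s) / J)
            (-a * ((besselJr 0 (a*r) - besselJr 1 (a*r) / (a*r)) * a) / J) r := by
          exact ((((hasDerivAt_J1 (a*r) harρ).comp r hinner)).const_mul (-a)).div_const J
        have hd2 := hψd.congr_of_eventuallyEq hev
        first
        | exact hd2.differentiableAt
        | {
            rw [hd2.deriv, hderiv_f r hr0, hφdef]
            simp only [if_pos hrρ]
            rw [hfin r hr0 hrρ.le]
            have hrne : r ≠ 0 := ne_of_gt hr0
            have hane : a ≠ 0 := ne_of_gt ha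
            field_simp
            ring }
      }
    · have hr0 : (0:ℝ) < r := hρ.trans hgt
      have hDfr := hDf r hr0
      refine ⟨hDfr.differentiableAt, ?_, ?_⟩
      all_goals {
        have hev : deriv f =ᶠ[𝓝 r] (fun _ => (0:ℝ)) := by
          filter_upwards [Ioi_mem_nhds hgt] with s hs
          rw [hderiv_f s (hρ.trans hs), hφdef]
          simp only [if_neg (not_lt.mpr (le_of_lt (Set.mem_Ioi.mp hs)))]
        have hd2 := (hasDerivAt_const r (0:ℝ)).congr_of_eventuallyEq hev
        first
        | exact hd2.differentiableAt
        | {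
            rw [hd2.deriv, hderiv_f r hr0, hφdef]
            simp only [if_neg (not_lt.mpr hgt.le)]
            simp }
      }
  · -- boundedness
    have hFc : ContinuousOn F (Set.Icc 0 ρ) :=
      ((continuous_J0.comp (continuous_const.mul continuous_id)).div_const J).continuousOn
    obtain ⟨C, hC⟩ := (isCompact_Icc).exists_bound_of_continuousOn hFc
    refine ⟨max C 1, fun r hr => ?_⟩
    rcases le_or_gt r ρ with h | h
    · rw [hfin r hr h]
      have := hC r ⟨hr.le, h⟩
      simp only [hFdef, Real.norm_eq_abs] at this
      exact le_trans this (le_max_left _ _)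
    · rw [hfout r h]
      simpa using le_max_right C 1
  · -- limit
    have hev : (fun _ => (1:ℝ)) =ᶠ[Filter.atTop] f := by
      filter_upwards [Filter.Ioi_mem_atTop ρ] with r hr
      exact (hfout r hr).symm
    exact tendsto_const_nhds.congr' hev
end

section
/- Let ℓ ≥ 0 be an integer, ρ > 0 and a₀ > 0. Suppose (κ_k) is a sequence of positive reals with κ_k → 0, (a_k) is a sequence of positive reals with a_k → a₀, and Q_ℓ(iκ_k, a_k) = 0 for every k. Then J_{ℓ−1}(ρa₀) = 0 (interpreting J_{−1} = −J_1, so that for ℓ = 0 the conclusion reads J_1(ρa₀) = 0). -/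
open scoped Real Topology
open Filter Asymptotics

section AuxLemmas

open Filter

lemma continuousAt_bseries (c : ℕ → ℂ) (C : ℝ) (hc : ∀ k, ‖c k‖ ≤ C / (Nat.factorial k)) (m : ℕ) (z₀ : ℂ) :
    ContinuousAt (fun z : ℂ => ∑' k : ℕ, c k * (z/2)^(2*k+m)) z₀ := by
  have hC0 : 0 ≤ C := le_trans (norm_nonneg (c 0)) (by simpa using hc 0)
  set R : ℝ := ‖z₀‖ + 1 with hR
  have hR0 : 0 < R := by positivity
  have hCont : ContinuousOn (fun z : ℂ => ∑' k : ℕ, c k * (z/2)^(2*k+m)) (Metric.closedBall 0 R) := by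
    apply continuousOn_tsum (u := fun k => (C * (R/2)^m) * (((R/2)^2)^k / (Nat.factorial k)))
    · intro i
      exact (continuous_const.mul ((continuous_id.div_const 2).pow _)).continuousOn
    · exact (Real.summable_pow_div_factorial ((R/2)^2)).mul_left _
    · intro k z hz
      have hz' : ‖z‖ ≤ R := by simpa [dist_eq_norm] using hz
      have h1 : ‖(z/2)^(2*k+m)‖ ≤ (R/2)^(2*k+m) := by
        rw [norm_pow]
        apply pow_le_pow_left₀ (norm_nonneg _)
        rw [norm_div]
        simp only [Complex.norm_ofNat]
        linarith
      calc ‖c k * (z/2)^(2*k+m)‖ = ‖c k‖ * ‖(z/2)^(2*k+m)‖ := norm_mul _ _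
        _ ≤ (C / (Nat.factorial k)) * (R/2)^(2*k+m) := by
            apply mul_le_mul (hc k) h1 (norm_nonneg _) (by positivity)
        _ = (C * (R/2)^m) * (((R/2)^2)^k / (Nat.factorial k)) := by
            rw [pow_add, pow_mul]; ring
  apply hCont.continuousAt
  apply Metric.closedBall_mem_nhds_of_mem
  simp [dist_eq_norm, hR]

lemma bseries_at_zero (c : ℕ → ℂ) (m : ℕ) :
    ∑' k : ℕ, c k * ((0:ℂ)/2)^(2*k+m) = c 0 * 0^m := by
  rw [tsum_eq_single 0]
  · norm_num
  · intro k hk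
    have h : 2*k+m ≠ 0 := by omega
    norm_num [zero_pow h]

lemma harm_nonneg (m : ℕ) : 0 ≤ harm m :=
  Finset.sum_nonneg (fun j _ => by positivity)

lemma harm_le (m : ℕ) : harm m ≤ m := by
  calc harm m ≤ ∑ j ∈ Finset.range m, (1:ℝ) := by
        apply Finset.sum_le_sum
        intro j _
        rw [div_le_one (by positivity)]
        linarith [Nat.cast_nonneg (α := ℝ) j]
    _ = m := by simp

lemma coefJ_bound (m : ℕ) (k : ℕ) :
    ‖((-1:ℂ)^k / ((Nat.factorial k : ℂ) * (Nat.factorial (k+m) : ℂ)))‖ ≤ 1 / (Nat.factorial k) := by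
  rw [norm_div, norm_pow, norm_neg, norm_one, one_pow, norm_mul, Complex.norm_natCast, Complex.norm_natCast]
  have h1 : (0:ℝ) < (Nat.factorial k) := by exact_mod_cast Nat.factorial_pos k
  have h2 : (1:ℝ) ≤ (Nat.factorial (k+m)) := by exact_mod_cast Nat.one_le_iff_ne_zero.2 (Nat.factorial_ne_zero _)
  rw [div_le_div_iff₀ (by positivity) h1]
  nlinarith

lemma coefY_bound (m : ℕ) (k : ℕ) :
    ‖((-1:ℂ)^k * ((harm k : ℝ) + (harm (k+m) : ℝ)) / ((Nat.factorial k : ℂ) * (Nat.factorial (k+m) : ℂ)))‖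
      ≤ 2 / (Nat.factorial k) := by
  rw [norm_div, norm_mul, norm_pow, norm_neg, norm_one, one_pow, one_mul, norm_mul,
    Complex.norm_natCast, Complex.norm_natCast]
  have h1 : (0:ℝ) < (Nat.factorial k) := by exact_mod_cast Nat.factorial_pos k
  have h1' : (0:ℝ) < (Nat.factorial (k+m)) := by exact_mod_cast Nat.factorial_pos (k+m)
  have hnum : ‖((harm k : ℝ) : ℂ) + ((harm (k+m) : ℝ) : ℂ)‖ ≤ 2 * (Nat.factorial (k+m)) := by
    rw [← Complex.ofReal_add, Complex.norm_real, Real.norm_eq_abs,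
      abs_of_nonneg (add_nonneg (harm_nonneg k) (harm_nonneg (k+m)))]
    have hk : harm k ≤ harm (k+m) := by
      unfold harm
      apply Finset.sum_le_sum_of_subset_of_nonneg
      · exact Finset.range_subset_range.2 (by omega)
      · intro j _ _; positivity
    have h3 : harm (k+m) ≤ (k+m : ℕ) := harm_le _
    have h4 : ((k+m : ℕ) : ℝ) ≤ (Nat.factorial (k+m)) := by exact_mod_cast Nat.self_le_factorial _
    linarith
  rw [div_le_div_iff₀ (by positivity) h1]
  nlinarith [norm_nonneg (((harm k : ℝ):ℂ) + ((harm (k+m) : ℝ):ℂ))]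

noncomputable def Tser (m : ℕ) (z : ℂ) : ℂ :=
  ∑' k : ℕ, ((-1:ℂ)^k * ((harm k : ℝ) + (harm (k+m) : ℝ)) / ((Nat.factorial k : ℂ) * (Nat.factorial (k+m) : ℂ))) * (z/2)^(2*k+m)

lemma besselJn_tendsto (m : ℕ) {z : ℕ → ℂ} {z₀ : ℂ} (hz : Tendsto z atTop (nhds z₀)) :
    Tendsto (fun k => besselJn m (z k)) atTop (nhds (besselJn m z₀)) :=
  ((continuousAt_bseries _ 1 (coefJ_bound m) m z₀).tendsto).comp hz

lemma Tser_tendsto (m : ℕ) {z : ℕ → ℂ} {z₀ : ℂ} (hz : Tendsto z atTop (nhds z₀)) :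
    Tendsto (fun k => Tser m (z k)) atTop (nhds (Tser m z₀)) :=
  ((continuousAt_bseries _ 2 (coefY_bound m) m z₀).tendsto).comp hz

lemma besselJn_zero (m : ℕ) : besselJn m 0 = if m = 0 then 1 else 0 := by
  unfold besselJn
  rw [bseries_at_zero]
  rcases Nat.eq_zero_or_pos m with h | h
  · simp [h]
  · simp [Nat.pos_iff_ne_zero.1 h, zero_pow (Nat.pos_iff_ne_zero.1 h)]

lemma keyY (m : ℕ) (hm : 1 ≤ m) (w : ℕ → ℂ) (hwne : ∀ k, w k ≠ 0)
    (hw0 : Tendsto w atTop (nhds 0))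
    (hlog : Tendsto (fun k => w k * Complex.log (w k / 2)) atTop (nhds 0)) :
    Tendsto (fun k => w k ^ m * besselYn m (w k)) atTop
      (nhds (-(1/(Real.pi:ℂ)) * (Nat.factorial (m-1) : ℂ) * 2^m)) := by
  have hm0 : m ≠ 0 := by omega
  set c : ℕ → ℂ := fun j => ((Nat.factorial (m - j - 1) : ℂ) / (Nat.factorial j : ℂ)) with hc
  have heq : ∀ k, w k ^ m * besselYn m (w k) =
      (2/(Real.pi:ℂ)) * ((w k * Complex.log (w k / 2)) * (w k)^(m-1) * besselJn m (w k))
      + (2/(Real.pi:ℂ)) * (eulerGamma:ℂ) * ((w k)^m * besselJn m (w k))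
      - (1/(Real.pi:ℂ)) * ∑ j ∈ Finset.range m, c j * ((2:ℂ)^((m:ℤ) - 2*j) * ((w k)^2)^j)
      - (1/(Real.pi:ℂ)) * ((w k)^m * Tser m (w k)) := by
    intro k
    set z := w k with hz
    have hzne : z ≠ 0 := hwne k
    have hpow : z ^ m = z * z^(m-1) := by
      conv_lhs => rw [show m = 1 + (m-1) by omega]
      rw [pow_add, pow_one]
    have hsum : z ^ m * ∑ j ∈ Finset.range m, c j * (z/2)^(2*(j:ℤ) - (m:ℤ)) =
        ∑ j ∈ Finset.range m, c j * ((2:ℂ)^((m:ℤ) - 2*j) * (z^2)^j) := by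
      rw [Finset.mul_sum]
      apply Finset.sum_congr rfl
      intro j _
      rw [mul_left_comm]
      congr 1
      rw [div_zpow, div_eq_mul_inv, ← zpow_neg, neg_sub, ← zpow_natCast z m, ← mul_assoc,
        ← zpow_add₀ hzne, show (m:ℤ) + (2*(j:ℤ) - m) = 2*j by ring, zpow_mul]
      norm_cast
      ring
    have hYn : besselYn m z = (2/(Real.pi:ℂ)) * (Complex.log (z/2) + (eulerGamma : ℂ)) * besselJn m z
      - (1/(Real.pi : ℂ)) * ∑ j ∈ Finset.range m, c j * (z/2)^(2*(j:ℤ) - (m:ℤ))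
      - (1/(Real.pi : ℂ)) * Tser m z := rfl
    rw [hYn]
    rw [mul_sub, mul_sub, mul_left_comm (z^m) (1/(Real.pi:ℂ)), hsum,
      mul_left_comm (z^m) (1/(Real.pi:ℂ))]
    rw [hpow]
    ring
  have hJ := besselJn_tendsto m hw0
  have hT := Tser_tendsto m hw0
  have l1 : Tendsto (fun k => (2/(Real.pi:ℂ)) * ((w k * Complex.log (w k / 2)) * (w k)^(m-1) * besselJn m (w k))) atTop (nhds 0) := by
    have := (((hlog.mul (hw0.pow (m-1))).mul hJ).const_mul (2/(Real.pi:ℂ)))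
    simpa using this
  have l2 : Tendsto (fun k => (2/(Real.pi:ℂ)) * (eulerGamma:ℂ) * ((w k)^m * besselJn m (w k))) atTop (nhds 0) := by
    have := (((hw0.pow m).mul hJ).const_mul ((2/(Real.pi:ℂ)) * (eulerGamma:ℂ)))
    simpa [zero_pow hm0] using this
  have l3 : Tendsto (fun k => (1/(Real.pi:ℂ)) * ∑ j ∈ Finset.range m, c j * ((2:ℂ)^((m:ℤ) - 2*j) * ((w k)^2)^j)) atTop
      (nhds ((1/(Real.pi:ℂ)) * ∑ j ∈ Finset.range m, c j * ((2:ℂ)^((m:ℤ) - 2*j) * ((0:ℂ)^2)^j))) := by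
    apply Tendsto.const_mul
    apply tendsto_finset_sum
    intro j _
    exact (((hw0.pow 2).pow j).const_mul _).const_mul _
  have l4 : Tendsto (fun k => (1/(Real.pi:ℂ)) * ((w k)^m * Tser m (w k))) atTop (nhds 0) := by
    have := (((hw0.pow m).mul hT).const_mul (1/(Real.pi:ℂ)))
    simpa [zero_pow hm0] using this
  have total := ((l1.add l2).sub l3).sub l4
  have hval : 0 + 0 - (1/(Real.pi:ℂ)) * (∑ j ∈ Finset.range m, c j * ((2:ℂ)^((m:ℤ) - 2*j) * ((0:ℂ)^2)^j)) - 0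
      = -(1/(Real.pi:ℂ)) * (Nat.factorial (m-1) : ℂ) * 2^m := by
    rw [Finset.sum_eq_single_of_mem 0 (Finset.mem_range.2 (by omega))]
    · simp [hc]
      ring
    · intro j _ hj
      simp [zero_pow hj, zero_pow (two_ne_zero)]
  rw [hval] at total
  exact total.congr (fun k => (heq k).symm)

lemma keyY0 (w : ℕ → ℂ) (hw0 : Tendsto w atTop (nhds 0))
    (hlog : Tendsto (fun k => w k * Complex.log (w k / 2)) atTop (nhds 0)) :
    Tendsto (fun k => w k ^ 2 * besselYn 0 (w k)) atTop (nhds 0) := by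
  have heq : ∀ k, w k ^ 2 * besselYn 0 (w k) =
      (2/(Real.pi:ℂ)) * ((w k * Complex.log (w k / 2)) * (w k) * besselJn 0 (w k))
      + (2/(Real.pi:ℂ)) * (eulerGamma:ℂ) * ((w k)^2 * besselJn 0 (w k))
      - (1/(Real.pi:ℂ)) * ((w k)^2 * Tser 0 (w k)) := by
    intro k
    set z := w k with hz
    have hYn : besselYn 0 z = (2/(Real.pi:ℂ)) * (Complex.log (z/2) + (eulerGamma : ℂ)) * besselJn 0 z
      - (1/(Real.pi : ℂ)) * ∑ j ∈ Finset.range 0, ((Nat.factorial (0 - j - 1) : ℂ) / (Nat.factorial j : ℂ)) * (z/2)^(2*(j:ℤ) - ((0:ℕ):ℤ))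
      - (1/(Real.pi : ℂ)) * Tser 0 z := rfl
    rw [hYn, Finset.sum_range_zero]
    ring
  have l1 := ((hlog.mul hw0).mul (besselJn_tendsto 0 hw0)).const_mul (2/(Real.pi:ℂ))
  have l2 := ((hw0.pow 2).mul (besselJn_tendsto 0 hw0)).const_mul ((2/(Real.pi:ℂ)) * (eulerGamma:ℂ))
  have l3 := ((hw0.pow 2).mul (Tser_tendsto 0 hw0)).const_mul (1/(Real.pi:ℂ))
  have total := (l1.add l2).sub l3
  have := total.congr (fun k => (heq k).symm)
  simpa using this

lemma keyH (m : ℕ) (hm : 1 ≤ m) (w : ℕ → ℂ) (hwne : ∀ k, w k ≠ 0)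
    (hw0 : Tendsto w atTop (nhds 0))
    (hlog : Tendsto (fun k => w k * Complex.log (w k / 2)) atTop (nhds 0)) :
    Tendsto (fun k => w k ^ m * (besselJn m (w k) + Complex.I * besselYn m (w k))) atTop
      (nhds (Complex.I * (-(1/(Real.pi:ℂ)) * (Nat.factorial (m-1) : ℂ) * 2^m))) := by
  have h1 := (hw0.pow m).mul (besselJn_tendsto m hw0)
  have h2 := (keyY m hm w hwne hw0 hlog).const_mul Complex.I
  have total := h1.add h2
  have := total.congr (fun k => by ring :
    ∀ k, w k ^ m * besselJn m (w k) + Complex.I * (w k ^ m * besselYn m (w k))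
      = w k ^ m * (besselJn m (w k) + Complex.I * besselYn m (w k)))
  simpa [zero_pow (by omega : m ≠ 0)] using this

end AuxLemmas

/-- if eigenvalues (zeros of `Q_ℓ` on the positive imaginary axis) approach `0`
as the well depth approaches `a₀`, then `J_{ℓ-1}(ρ a₀) = 0`. -/
theorem stmt_3 (ℓ : ℕ) (ρ a₀ : ℝ) (hρ : 0 < ρ) (ha₀ : 0 < a₀)
    (κ : ℕ → ℝ) (a : ℕ → ℝ)
    (hκpos : ∀ k, 0 < κ k) (hapos : ∀ k, 0 < a k)
    (hκlim : Filter.Tendsto κ Filter.atTop (nhds 0))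
    (halim : Filter.Tendsto a Filter.atTop (nhds a₀))
    (hQ : ∀ k, Qfun ρ (ℓ : ℤ) (Complex.I * (κ k : ℂ)) (a k) = 0) :
    besselJZ ((ℓ : ℤ) - 1) ((ρ * a₀ : ℝ) : ℂ) = 0 := by
  have hπ : (Real.pi:ℂ) ≠ 0 := by exact_mod_cast Real.pi_ne_zero
  have hρℂ : (ρ:ℂ) ≠ 0 := by exact_mod_cast hρ.ne'
  have ha₀ℂ : (a₀:ℂ) ≠ 0 := by exact_mod_cast ha₀.ne'
  set w : ℕ → ℂ := fun k => Complex.I * (κ k : ℂ) * (ρ:ℂ) with hwdef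
  have hwne : ∀ k, w k ≠ 0 := by
    intro k
    simp only [hwdef]
    exact mul_ne_zero (mul_ne_zero Complex.I_ne_zero (by exact_mod_cast (hκpos k).ne')) hρℂ
  have hκℂ : Filter.Tendsto (fun k => ((κ k : ℝ):ℂ)) Filter.atTop (nhds 0) := by
    have := (Complex.continuous_ofReal.tendsto 0).comp hκlim
    simpa [Function.comp_def] using this
  have hw0 : Filter.Tendsto w Filter.atTop (nhds 0) := by
    have := (hκℂ.const_mul Complex.I).mul_const ((ρ:ℝ):ℂ)
    simpa [hwdef] using this
  -- the log of w/2
  set r : ℕ → ℝ := fun k => κ k * ρ / 2 with hrdef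
  have hrpos : ∀ k, 0 < r k := fun k => by
    have := hκpos k
    simp only [hrdef]; positivity
  have hwdiv : ∀ k, w k / 2 = ((r k : ℝ):ℂ) * Complex.I := by
    intro k
    simp only [hwdef, hrdef]
    push_cast
    ring
  have hlogf : ∀ k, Complex.log (w k / 2) = ((Real.log (r k) : ℝ):ℂ) + ((Real.pi/2 : ℝ):ℂ) * Complex.I := by
    intro k
    rw [hwdiv k]
    apply Complex.ext
    · rw [Complex.log_re]
      simp [abs_of_pos (hrpos k)]
    · rw [Complex.log_im, Complex.arg_real_mul _ (hrpos k), Complex.arg_I]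
      simp
  have hr0 : Filter.Tendsto r Filter.atTop (nhdsWithin 0 (Set.Ioi 0)) := by
    rw [tendsto_nhdsWithin_iff]
    constructor
    · have := (hκlim.mul_const ρ).div_const 2
      simpa [hrdef] using this
    · exact Filter.Eventually.of_forall (fun k => hrpos k)
  have hlogr : Filter.Tendsto (fun k => Real.log (r k)) Filter.atTop Filter.atBot :=
    Real.tendsto_log_nhdsGT_zero.comp hr0
  have hrlogr : Filter.Tendsto (fun k => Real.log (r k) * r k) Filter.atTop (nhds 0) := by
    have := (tendsto_log_mul_rpow_nhdsGT_zero one_pos).comp hr0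
    simpa [Real.rpow_one, Function.comp_def] using this
  have hlog : Filter.Tendsto (fun k => w k * Complex.log (w k / 2)) Filter.atTop (nhds 0) := by
    apply squeeze_zero_norm (a := fun k => 2 * |Real.log (r k) * r k| + Real.pi * r k)
    · intro k
      rw [hlogf k, norm_mul]
      have h1 : ‖w k‖ = 2 * r k := by
        simp only [hwdef, hrdef, norm_mul, Complex.norm_I, Complex.norm_real, Real.norm_eq_abs,
          one_mul, abs_of_pos (hκpos k), abs_of_pos hρ]
        ring
      have h2 : ‖((Real.log (r k) : ℝ):ℂ) + ((Real.pi/2 : ℝ):ℂ) * Complex.I‖ ≤ |Real.log (r k)| + Real.pi/2 := by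
        refine le_trans (Complex.norm_le_abs_re_add_abs_im _) ?_
        have hpi2 : |Real.pi/2| = Real.pi/2 := abs_of_nonneg (by positivity)
        simp [hpi2]
      calc ‖w k‖ * ‖((Real.log (r k) : ℝ):ℂ) + ((Real.pi/2 : ℝ):ℂ) * Complex.I‖
          ≤ (2 * r k) * (|Real.log (r k)| + Real.pi/2) := by
            rw [h1]
            apply mul_le_mul_of_nonneg_left h2 (by linarith [hrpos k])
        _ = 2 * |Real.log (r k) * r k| + Real.pi * r k := by
            rw [abs_mul, abs_of_pos (hrpos k)]
            ring
    · have hr00 : Filter.Tendsto r Filter.atTop (nhds 0) := by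
        have := (hκlim.mul_const ρ).div_const 2
        simpa [hrdef] using this
      have := (hrlogr.abs.const_mul 2).add (hr00.const_mul Real.pi)
      simpa using this
  -- μ is eventually a positive real
  have hev : ∀ᶠ k in Filter.atTop, κ k < a k := by
    have h1 := hκlim.eventually (eventually_lt_nhds (by linarith : (0:ℝ) < a₀/2))
    have h2 := halim.eventually (eventually_gt_nhds (by linarith : a₀/2 < a₀))
    filter_upwards [h1, h2] with k hk1 hk2
    linarith
  set b : ℕ → ℝ := fun k => Real.sqrt ((a k)^2 - (κ k)^2) with hbdef
  have hμ : ∀ᶠ k in Filter.atTop, muC (a k) (Complex.I * (κ k:ℂ)) = ((b k : ℝ):ℂ) := by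
    filter_upwards [hev] with k hk
    have hx : (0:ℝ) ≤ (a k)^2 - (κ k)^2 := by nlinarith [(hκpos k).le]
    unfold muC
    have h1 : (Complex.I * (κ k:ℂ))^2 + ((a k :ℝ):ℂ)^2 = ((((a k)^2 - (κ k)^2 : ℝ)):ℂ) := by
      rw [mul_pow, Complex.I_sq]
      push_cast
      ring
    rw [h1]
    simp only [hbdef]
    rw [show ((1:ℂ)/2) = (((1/2 : ℝ)):ℂ) by norm_num, ← Complex.ofReal_cpow hx]
    norm_num [Real.sqrt_eq_rpow]
  have hblim : Filter.Tendsto b Filter.atTop (nhds a₀) := by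
    have h1 : Filter.Tendsto (fun k => (a k)^2 - (κ k)^2) Filter.atTop (nhds (a₀^2)) := by
      have := (halim.pow 2).sub (hκlim.pow 2)
      simpa using this
    have := (Real.continuous_sqrt.tendsto (a₀^2)).comp h1
    simpa [hbdef, Real.sqrt_sq ha₀.le, Function.comp_def] using this
  have hbℂ : Filter.Tendsto (fun k => ((b k : ℝ):ℂ)) Filter.atTop (nhds ((a₀:ℝ):ℂ)) :=
    (Complex.continuous_ofReal.tendsto _).comp hblim
  have hzc : Filter.Tendsto (fun k => (ρ:ℂ) * ((b k : ℝ):ℂ)) Filter.atTop (nhds (((ρ * a₀ : ℝ)):ℂ)) := by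
    have := hbℂ.const_mul ((ρ:ℝ):ℂ)
    push_cast
    simpa using this
  have hpw : ∀ k, w k ^ ℓ * w k = w k^2 * w k^(ℓ-1) ∨ True := fun k => Or.inr trivial
  -- case split
  rcases Nat.eq_zero_or_pos ℓ with hℓ0 | hℓpos
  · -- ℓ = 0
    subst hℓ0
    have hJZneg : ∀ z : ℂ, besselJZ (((0:ℕ):ℤ) - 1) z = - besselJn 1 z := by
      intro z
      rw [show (((0:ℕ):ℤ) - 1) = (-1 : ℤ) by norm_num]
      unfold besselJZ
      norm_num
    have hHneg : ∀ z : ℂ, hankelH1 (((0:ℕ):ℤ) - 1) z = -(besselJn 1 z + Complex.I * besselYn 1 z) := by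
      intro z
      rw [show (((0:ℕ):ℤ) - 1) = (-1 : ℤ) by norm_num]
      unfold hankelH1 besselJZ besselYZ
      norm_num
      ring
    have hH0 : ∀ z : ℂ, hankelH1 ((0:ℕ):ℤ) z = besselJn 0 z + Complex.I * besselYn 0 z := by
      intro z
      unfold hankelH1 besselJZ besselYZ
      norm_num
    have hJZ0 : ∀ z : ℂ, besselJZ ((0:ℕ):ℤ) z = besselJn 0 z := by
      intro z
      unfold besselJZ
      norm_num
    rw [hJZneg, neg_eq_zero]
    by_contra hβ
    -- the equation
    have hEq : ∀ᶠ k in Filter.atTop,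
        ((b k : ℝ):ℂ) * besselJn 1 ((ρ:ℂ) * ((b k : ℝ):ℂ)) * (besselJn 0 (w k) + Complex.I * besselYn 0 (w k))
        = Complex.I * (κ k:ℂ) * besselJn 0 ((ρ:ℂ) * ((b k : ℝ):ℂ)) * (besselJn 1 (w k) + Complex.I * besselYn 1 (w k)) := by
      filter_upwards [hμ] with k hk
      have h0 := hQ k
      unfold Qfun at h0
      rw [hk] at h0
      rw [hJZneg, hJZ0, hH0, hHneg] at h0
      linear_combination -h0
    -- RHS limit
    have hH1lim := keyH 1 le_rfl w hwne hw0 hlog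
    have hRlim : Filter.Tendsto
        (fun k => Complex.I * (κ k:ℂ) * besselJn 0 ((ρ:ℂ) * ((b k : ℝ):ℂ)) * (besselJn 1 (w k) + Complex.I * besselYn 1 (w k)))
        Filter.atTop
        (nhds ((1/(ρ:ℂ)) * besselJn 0 (((ρ * a₀ : ℝ)):ℂ) * (Complex.I * (-(1/(Real.pi:ℂ)) * (Nat.factorial 0 : ℂ) * 2^1)))) := by
      have hrw : ∀ k, Complex.I * (κ k:ℂ) * besselJn 0 ((ρ:ℂ) * ((b k : ℝ):ℂ)) * (besselJn 1 (w k) + Complex.I * besselYn 1 (w k))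
          = (1/(ρ:ℂ)) * besselJn 0 ((ρ:ℂ) * ((b k : ℝ):ℂ)) * (w k ^ 1 * (besselJn 1 (w k) + Complex.I * besselYn 1 (w k))) := by
        intro k
        have : Complex.I * (κ k:ℂ) = w k / (ρ:ℂ) := by
          simp only [hwdef]
          field_simp
        rw [this]
        field_simp
      have := (Filter.Tendsto.mul ((besselJn_tendsto 0 hzc).const_mul (1/(ρ:ℂ))) hH1lim)
      exact this.congr (fun k => (hrw k).symm)
    -- β_k
    set β := besselJn 1 (((ρ * a₀ : ℝ)):ℂ) with hβdef
    have hβk : Filter.Tendsto (fun k => ((b k : ℝ):ℂ) * besselJn 1 ((ρ:ℂ) * ((b k : ℝ):ℂ))) Filter.atTop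
        (nhds (((a₀:ℝ):ℂ) * β)) := hbℂ.mul (besselJn_tendsto 1 hzc)
    have hβne : ((a₀:ℝ):ℂ) * β ≠ 0 := mul_ne_zero ha₀ℂ hβ
    have hβkne : ∀ᶠ k in Filter.atTop, ((b k : ℝ):ℂ) * besselJn 1 ((ρ:ℂ) * ((b k : ℝ):ℂ)) ≠ 0 :=
      hβk.eventually_ne hβne
    have hH0lim : Filter.Tendsto (fun k => besselJn 0 (w k) + Complex.I * besselYn 0 (w k)) Filter.atTop
        (nhds (((1/(ρ:ℂ)) * besselJn 0 (((ρ * a₀ : ℝ)):ℂ) * (Complex.I * (-(1/(Real.pi:ℂ)) * (Nat.factorial 0 : ℂ) * 2^1))) / (((a₀:ℝ):ℂ) * β))) := by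
      have hdiv := hRlim.div hβk hβne
      apply hdiv.congr'
      filter_upwards [hEq, hβkne] with k hk hne
      simp only [Pi.div_apply]
      rw [← hk]
      exact mul_div_cancel_left₀ _ hne
    -- extract log convergence
    have hidentity : ∀ k, Complex.log (w k / 2) * besselJn 0 (w k) =
        ((Real.pi:ℂ)/(2*Complex.I)) * ((besselJn 0 (w k) + Complex.I * besselYn 0 (w k)) - besselJn 0 (w k))
        + Tser 0 (w k) / 2 - (eulerGamma:ℂ) * besselJn 0 (w k) := by
      intro k
      set z := w k with hz
      have hYn : besselYn 0 z = (2/(Real.pi:ℂ)) * (Complex.log (z/2) + (eulerGamma : ℂ)) * besselJn 0 z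
        - (1/(Real.pi : ℂ)) * ∑ j ∈ Finset.range 0, ((Nat.factorial (0 - j - 1) : ℂ) / (Nat.factorial j : ℂ)) * (z/2)^(2*(j:ℤ) - ((0:ℕ):ℤ))
        - (1/(Real.pi : ℂ)) * Tser 0 z := rfl
      rw [hYn, Finset.sum_range_zero]
      field_simp
      ring
    have hLJ : Filter.Tendsto (fun k => Complex.log (w k / 2) * besselJn 0 (w k)) Filter.atTop
        (nhds (((Real.pi:ℂ)/(2*Complex.I)) * ((((1/(ρ:ℂ)) * besselJn 0 (((ρ * a₀ : ℝ)):ℂ) * (Complex.I * (-(1/(Real.pi:ℂ)) * (Nat.factorial 0 : ℂ) * 2^1))) / (((a₀:ℝ):ℂ) * β)) - besselJn 0 0)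
          + Tser 0 0 / 2 - (eulerGamma:ℂ) * besselJn 0 0)) := by
      have := (((hH0lim.sub (besselJn_tendsto 0 hw0)).const_mul ((Real.pi:ℂ)/(2*Complex.I))).add
        ((Tser_tendsto 0 hw0).div_const 2)).sub ((besselJn_tendsto 0 hw0).const_mul (eulerGamma:ℂ))
      exact this.congr (fun k => (hidentity k).symm)
    have hJ00 : besselJn 0 0 = 1 := by rw [besselJn_zero]; norm_num
    have hJ0ne : ∀ᶠ k in Filter.atTop, besselJn 0 (w k) ≠ 0 := by
      apply (besselJn_tendsto 0 hw0).eventually_ne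
      rw [hJ00]
      norm_num
    have hLconv : Filter.Tendsto (fun k => Complex.log (w k / 2)) Filter.atTop
        (nhds ((((Real.pi:ℂ)/(2*Complex.I)) * ((((1/(ρ:ℂ)) * besselJn 0 (((ρ * a₀ : ℝ)):ℂ) * (Complex.I * (-(1/(Real.pi:ℂ)) * (Nat.factorial 0 : ℂ) * 2^1))) / (((a₀:ℝ):ℂ) * β)) - besselJn 0 0)
          + Tser 0 0 / 2 - (eulerGamma:ℂ) * besselJn 0 0) / besselJn 0 0)) := by
      have hdiv := hLJ.div (besselJn_tendsto 0 hw0) (by rw [hJ00]; norm_num)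
      apply hdiv.congr'
      filter_upwards [hJ0ne] with k hk
      simp only [Pi.div_apply]
      exact mul_div_cancel_right₀ _ hk
    have hreconv : Filter.Tendsto (fun k => Real.log (r k)) Filter.atTop
        (nhds (((((Real.pi:ℂ)/(2*Complex.I)) * ((((1/(ρ:ℂ)) * besselJn 0 (((ρ * a₀ : ℝ)):ℂ) * (Complex.I * (-(1/(Real.pi:ℂ)) * (Nat.factorial 0 : ℂ) * 2^1))) / (((a₀:ℝ):ℂ) * β)) - besselJn 0 0)
          + Tser 0 0 / 2 - (eulerGamma:ℂ) * besselJn 0 0) / besselJn 0 0).re)) := by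
      have := (Complex.continuous_re.tendsto _).comp hLconv
      apply this.congr
      intro k
      simp only [Function.comp_apply]
      rw [hlogf k]
      simp
    exact not_tendsto_atBot_of_tendsto_nhds hreconv hlogr
  · -- ℓ ≥ 1
    have hℓ1 : 1 ≤ ℓ := hℓpos
    have hcast : ((ℓ:ℤ) - 1) = ((ℓ - 1 : ℕ):ℤ) := by omega
    have hJZ1 : ∀ z : ℂ, besselJZ ((ℓ:ℤ) - 1) z = besselJn (ℓ-1) z := by
      intro z
      rw [hcast]
      unfold besselJZ
      simp
    have hJZℓ : ∀ z : ℂ, besselJZ (ℓ:ℤ) z = besselJn ℓ z := by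
      intro z
      unfold besselJZ
      simp
    have hHℓ : ∀ z : ℂ, hankelH1 (ℓ:ℤ) z = besselJn ℓ z + Complex.I * besselYn ℓ z := by
      intro z
      unfold hankelH1 besselJZ besselYZ
      simp
    have hHℓ1 : ∀ z : ℂ, hankelH1 ((ℓ:ℤ) - 1) z = besselJn (ℓ-1) z + Complex.I * besselYn (ℓ-1) z := by
      intro z
      rw [hcast]
      unfold hankelH1 besselJZ besselYZ
      simp
    have hEq : (fun k => ((b k : ℝ):ℂ) * besselJn (ℓ-1) ((ρ:ℂ) * ((b k : ℝ):ℂ)) * (w k ^ ℓ * (besselJn ℓ (w k) + Complex.I * besselYn ℓ (w k))))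
        =ᶠ[Filter.atTop]
        (fun k => (1/(ρ:ℂ)) * besselJn ℓ ((ρ:ℂ) * ((b k : ℝ):ℂ)) * (w k ^ 2 * (w k ^ (ℓ-1) * (besselJn (ℓ-1) (w k) + Complex.I * besselYn (ℓ-1) (w k))))) := by
      filter_upwards [hμ] with k hk
      have h0 := hQ k
      unfold Qfun at h0
      rw [hk] at h0
      rw [hJZ1, hJZℓ, hHℓ, hHℓ1] at h0
      have hIκ : Complex.I * (κ k:ℂ) = w k / (ρ:ℂ) := by
        simp only [hwdef]
        field_simp
      have hpw : w k ^ ℓ * w k = w k ^ 2 * w k ^ (ℓ-1) := by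
        rw [← pow_succ, ← pow_add]
        congr 1
        omega
      have h1 : ((b k : ℝ):ℂ) * besselJn (ℓ-1) ((ρ:ℂ) * ((b k : ℝ):ℂ)) * (besselJn ℓ (w k) + Complex.I * besselYn ℓ (w k))
          = Complex.I * (κ k:ℂ) * besselJn ℓ ((ρ:ℂ) * ((b k : ℝ):ℂ)) * (besselJn (ℓ-1) (w k) + Complex.I * besselYn (ℓ-1) (w k)) := by
        linear_combination h0
      calc ((b k : ℝ):ℂ) * besselJn (ℓ-1) ((ρ:ℂ) * ((b k : ℝ):ℂ)) * (w k ^ ℓ * (besselJn ℓ (w k) + Complex.I * besselYn ℓ (w k)))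
          = w k ^ ℓ * (((b k : ℝ):ℂ) * besselJn (ℓ-1) ((ρ:ℂ) * ((b k : ℝ):ℂ)) * (besselJn ℓ (w k) + Complex.I * besselYn ℓ (w k))) := by ring
        _ = w k ^ ℓ * (Complex.I * (κ k:ℂ) * besselJn ℓ ((ρ:ℂ) * ((b k : ℝ):ℂ)) * (besselJn (ℓ-1) (w k) + Complex.I * besselYn (ℓ-1) (w k))) := by rw [h1]
        _ = (1/(ρ:ℂ)) * besselJn ℓ ((ρ:ℂ) * ((b k : ℝ):ℂ)) * (w k ^ 2 * (w k ^ (ℓ-1) * (besselJn (ℓ-1) (w k) + Complex.I * besselYn (ℓ-1) (w k)))) := by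
            linear_combination (besselJn ℓ ((ρ:ℂ) * ((b k : ℝ):ℂ)) * (besselJn (ℓ-1) (w k) + Complex.I * besselYn (ℓ-1) (w k)) * w k ^ ℓ) * hIκ
              + (besselJn ℓ ((ρ:ℂ) * ((b k : ℝ):ℂ)) * (besselJn (ℓ-1) (w k) + Complex.I * besselYn (ℓ-1) (w k)) / (ρ:ℂ)) * hpw
    -- limits
    have hLlim : Filter.Tendsto
        (fun k => ((b k : ℝ):ℂ) * besselJn (ℓ-1) ((ρ:ℂ) * ((b k : ℝ):ℂ)) * (w k ^ ℓ * (besselJn ℓ (w k) + Complex.I * besselYn ℓ (w k))))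
        Filter.atTop
        (nhds (((a₀:ℝ):ℂ) * besselJn (ℓ-1) (((ρ * a₀:ℝ)):ℂ) * (Complex.I * (-(1/(Real.pi:ℂ)) * (Nat.factorial (ℓ-1) : ℂ) * 2^ℓ)))) := by
      exact (hbℂ.mul (besselJn_tendsto (ℓ-1) hzc)).mul (keyH ℓ hℓ1 w hwne hw0 hlog)
    have hinner : Filter.Tendsto (fun k => w k ^ 2 * (w k ^ (ℓ-1) * (besselJn (ℓ-1) (w k) + Complex.I * besselYn (ℓ-1) (w k)))) Filter.atTop (nhds 0) := by
      rcases Nat.lt_or_ge ℓ 2 with h2 | h2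
      · -- ℓ = 1
        have hℓeq : ℓ = 1 := by omega
        subst hℓeq
        have t1 : Filter.Tendsto (fun k => w k ^ 2 * besselJn 0 (w k)) Filter.atTop (nhds 0) := by
          have := (hw0.pow 2).mul (besselJn_tendsto 0 hw0)
          simpa using this
        have t2 := keyY0 w hw0 hlog
        have := t1.add (t2.const_mul Complex.I)
        have h3 := this.congr (fun k => by ring :
          ∀ k, w k ^ 2 * besselJn 0 (w k) + Complex.I * (w k ^ 2 * besselYn 0 (w k))
            = w k ^ 2 * (w k ^ (1-1) * (besselJn (1-1) (w k) + Complex.I * besselYn (1-1) (w k))))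
        simpa using h3
      · have hkey := keyH (ℓ-1) (by omega) w hwne hw0 hlog
        have := (hw0.pow 2).mul hkey
        simpa using this
    have hRlim : Filter.Tendsto
        (fun k => (1/(ρ:ℂ)) * besselJn ℓ ((ρ:ℂ) * ((b k : ℝ):ℂ)) * (w k ^ 2 * (w k ^ (ℓ-1) * (besselJn (ℓ-1) (w k) + Complex.I * besselYn (ℓ-1) (w k)))))
        Filter.atTop (nhds 0) := by
      have := ((besselJn_tendsto ℓ hzc).const_mul (1/(ρ:ℂ))).mul hinner
      simpa using this
    have huniq := tendsto_nhds_unique hLlim (hRlim.congr' hEq.symm)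
    have hfac : ((Nat.factorial (ℓ-1) : ℕ):ℂ) ≠ 0 := by
      exact_mod_cast Nat.factorial_ne_zero (ℓ-1)
    have hJ0 : besselJn (ℓ-1) (((ρ * a₀:ℝ)):ℂ) = 0 := by
      have h2 : Complex.I * (-(1/(Real.pi:ℂ)) * (Nat.factorial (ℓ-1) : ℂ) * 2^ℓ) ≠ 0 := by
        apply mul_ne_zero Complex.I_ne_zero
        apply mul_ne_zero (mul_ne_zero _ hfac) (pow_ne_zero _ two_ne_zero)
        simp [hπ]
      rcases mul_eq_zero.1 huniq with h | h
      · rcases mul_eq_zero.1 h with h' | h'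
        · exact absurd h' ha₀ℂ
        · exact h'
      · exact absurd h h2
    rw [hJZ1]
    exact hJ0
end
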